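/- arXiv:1307.5342 — 5 statements merged into one kernel-verified Lean document; each statement's English description precedes it below -/
import Mathlib

section
/- Let d ≥ 2 be an integer. Let ψ̂₁ : ℝ → ℂ satisfy ψ̂₁(ω) = 0 for ω ∉ [−1/2,−1/16] ∪ [1/16,1/2] and Σ_{j≥0} |ψ̂₁(2^{−2j} ω)|² = 1 for all ω with |ω| ≥ 1/8. Let ψ̂₂ : ℝ → ℂ be continuous with supp ψ̂₂ ⊂ [−1,1] and |ψ̂₂(ω−1)|² + |ψ̂₂(ω)|² + |ψ̂₂(ω+1)|² = 1 for all |ω| ≤ 1. Define ψ̂^{(1)}(ξ) = ψ̂₁(ξ₁) · Π_{𝔡=2}^{d} ψ̂₂(ξ_𝔡/ξ₁) for ξ = (ξ₁,…,ξ_d) with ξ₁ ≠ 0. Then for every ξ in the truncated cone C^{(1)} = { ξ ∈ ℝ^d : |ξ₁| ≥ 1/8 and |ξ_𝔡/ξ₁| ≤ 1 for 𝔡 = 2,…,d } one has Σ_{j≥0} Σ_{ℓ∈ℤ^{d−1}, |ℓ_i|≤2^j ∀i} |ψ̂^{(1)}( ξ (A_(1))^{−j} B_(1)^{[−ℓ]}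 )|² = 1, where ξ (A_(1))^{−j} B_(1)^{[−ℓ]} = ( 4^{−j}ξ₁, −4^{−j}ξ₁ℓ₁ + 2^{−j}ξ₂, …, −4^{−j}ξ₁ℓ_{d−1} + 2^{−j}ξ_d ). -/
open Finset Filter

private lemma psi2_boundary {ψ2 : ℝ → ℂ} (hc : Continuous ψ2)
    (hs : ∀ ω : ℝ, 1 < |ω| → ψ2 ω = 0) : ∀ ω : ℝ, 1 ≤ |ω| → ψ2 ω = 0 := by
  intro x hx
  rcases eq_or_lt_of_le hx with h | h
  · have hx' : x = 1 ∨ x = -1 := by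
      rcases abs_cases x with ⟨h1, _⟩ | ⟨h1, _⟩
      · left; linarith [h.symm]
      · right; linarith [h.symm]
    rcases hx' with rfl | rfl
    · have h1 : Tendsto ψ2 (nhdsWithin 1 (Set.Ioi 1)) (nhds (ψ2 1)) :=
        (hc.tendsto 1).mono_left nhdsWithin_le_nhds
      have h2 : Tendsto ψ2 (nhdsWithin 1 (Set.Ioi 1)) (nhds 0) := by
        apply Tendsto.congr' _ tendsto_const_nhds
        filter_upwards [self_mem_nhdsWithin] with y hy
        exact (hs y (by rw [abs_of_pos (by linarith [hy.out])]; exact hy.out)).symm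
      exact tendsto_nhds_unique h1 h2
    · have h1 : Tendsto ψ2 (nhdsWithin (-1) (Set.Iio (-1))) (nhds (ψ2 (-1))) :=
        (hc.tendsto (-1)).mono_left nhdsWithin_le_nhds
      have h2 : Tendsto ψ2 (nhdsWithin (-1) (Set.Iio (-1))) (nhds 0) := by
        apply Tendsto.congr' _ tendsto_const_nhds
        filter_upwards [self_mem_nhdsWithin] with y hy
        exact (hs y (by rw [abs_of_neg (by linarith [hy.out])]; linarith [hy.out])).symm
      exact tendsto_nhds_unique h1 h2
  · exact hs x h

private lemma sum_psi2_sq {ψ2 : ℝ → ℂ}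
    (hz : ∀ ω : ℝ, 1 ≤ |ω| → ψ2 ω = 0)
    (hsum : ∀ ω : ℝ, |ω| ≤ 1 →
      norm (ψ2 (ω - 1)) ^ 2 + norm (ψ2 ω) ^ 2 + norm (ψ2 (ω + 1)) ^ 2 = 1)
    (M : ℤ) (t : ℝ) (ht : |t| ≤ M) :
    ∑ l ∈ Finset.Icc (-M) M, norm (ψ2 (t - l)) ^ 2 = 1 := by
  set n : ℤ := round t with hn
  have hround : |t - n| ≤ 1 / 2 := abs_sub_round t
  have hMt : -(M : ℝ) ≤ t ∧ t ≤ (M : ℝ) := abs_le.mp ht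
  have hnM : -M ≤ n ∧ n ≤ M := by
    have h1 : (n : ℝ) < M + 1 := by
      have := abs_le.mp hround; linarith [hMt.2, this.1]
    have h2 : -(M : ℝ) - 1 < n := by
      have := abs_le.mp hround; linarith [hMt.1, this.2]
    have h1' : n < M + 1 := by exact_mod_cast h1
    have h2' : -M - 1 < n := by exact_mod_cast h2
    omega
  have hfar : ∀ l : ℤ, l ≠ n - 1 → l ≠ n → l ≠ n + 1 → ψ2 (t - l) = 0 := by
    intro l h1 h2 h3
    apply hz
    have hd : 2 ≤ |n - l| := le_abs.mpr (by omega)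
    have hd' : (2 : ℝ) ≤ |(n : ℝ) - l| := by exact_mod_cast hd
    have : |(n : ℝ) - l| ≤ |n - t| + |t - l| := by
      calc |(n : ℝ) - l| = |(n - t) + (t - l)| := by ring_nf
        _ ≤ |(n : ℝ) - t| + |t - l| := abs_add_le _ _
    have hnt : |(n : ℝ) - t| ≤ 1 / 2 := by rw [abs_sub_comm]; exact hround
    linarith
  have hbound : ∀ l ∈ ({n - 1, n, n + 1} : Finset ℤ), l ∉ Finset.Icc (-M) M →
      ψ2 (t - l) = 0 := by
    intro l hl hlI
    simp only [Finset.mem_insert, Finset.mem_singleton] at hl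
    simp only [Finset.mem_Icc, not_and_or, not_le] at hlI
    rcases hl with rfl | rfl | rfl
    · -- l = n - 1, must have n - 1 < -M, so n = -M, t ≥ n
      have hne : n = -M := by omega
      apply hz
      have ht1 : (n : ℝ) ≤ t := by rw [hne]; push_cast; linarith [hMt.1]
      have : (1 : ℝ) ≤ t - (↑(n - 1) : ℝ) := by push_cast; linarith
      exact le_abs.mpr (Or.inl this)
    · omega
    · have hne : n = M := by omega
      apply hz
      have ht1 : t ≤ (n : ℝ) := by rw [hne]; exact_mod_cast hMt.2
      have : t - (↑(n + 1) : ℝ) ≤ -1 := by push_cast; linarith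
      exact le_abs.mpr (Or.inr (by linarith))
  -- both sums equal sum over the union
  have e1 : ∑ l ∈ Finset.Icc (-M) M, norm (ψ2 (t - l)) ^ 2
      = ∑ l ∈ Finset.Icc (-M) M ∪ {n - 1, n, n + 1}, norm (ψ2 (t - l)) ^ 2 := by
    apply Finset.sum_subset Finset.subset_union_left
    intro x hxU hxI
    rw [hbound x (by rcases Finset.mem_union.mp hxU with h | h; exact absurd h hxI; exact h) hxI]
    simp
  have e2 : ∑ l ∈ ({n - 1, n, n + 1} : Finset ℤ), norm (ψ2 (t - l)) ^ 2
      = ∑ l ∈ Finset.Icc (-M) M ∪ {n - 1, n, n + 1}, norm (ψ2 (t - l)) ^ 2 := by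
    apply Finset.sum_subset Finset.subset_union_right
    intro x hxU hxT
    simp only [Finset.mem_insert, Finset.mem_singleton, not_or] at hxT
    rw [hfar x hxT.1 hxT.2.1 hxT.2.2]
    simp
  rw [e1, ← e2]
  have h1 : (n - 1 : ℤ) ∉ ({n, n + 1} : Finset ℤ) := by simp; omega
  have h2 : (n : ℤ) ∉ ({n + 1} : Finset ℤ) := by simp
  rw [Finset.sum_insert h1, Finset.sum_insert h2, Finset.sum_singleton]
  have key := hsum (t - n) (by linarith [abs_le.mp hround])
  have a1 : t - (↑(n - 1) : ℝ) = (t - n) + 1 := by push_cast; ring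
  have a2 : t - (↑(n + 1) : ℝ) = (t - n) - 1 := by push_cast; ring
  rw [a1, a2]
  linarith [key]


/-- The Parseval frame condition (2.5) of the paper on the truncated cone `C^{(1)}`:
for `ξ ∈ C^{(1)}`, `Σ_{j≥0} Σ_{|ℓ_i|≤2^j} |ψ̂^{(1)}(ξ A_(1)^{−j} B_(1)^{[−ℓ]})|² = 1`, where
`ψ̂^{(1)}(η) = ψ̂₁(η₁) Π_{𝔡=2}^{d} ψ̂₂(η_𝔡/η₁)` and
`ξ A_(1)^{−j} B_(1)^{[−ℓ]} = (4^{−j}ξ₁, −4^{−j}ξ₁ℓ₁+2^{−j}ξ₂, …, −4^{−j}ξ₁ℓ_{d−1}+2^{−j}ξ_d)`. -/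
theorem shearlet_parseval_frame_condition_on_cone (d : ℕ) (hd : 2 ≤ d) (ψ1 ψ2 : ℝ → ℂ)
    (hψ1supp : ∀ ω : ℝ,
      ω ∉ Set.Icc (-(1 : ℝ) / 2) (-(1 : ℝ) / 16) ∪ Set.Icc ((1 : ℝ) / 16) ((1 : ℝ) / 2) →
      ψ1 ω = 0)
    (hψ1sum : ∀ ω : ℝ, (1 : ℝ) / 8 ≤ |ω| →
      ∑' j : ℕ, norm (ψ1 ((2 : ℝ) ^ (-(2 * j : ℤ)) * ω)) ^ 2 = 1)
    (hψ2cont : Continuous ψ2)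
    (hψ2supp : ∀ ω : ℝ, 1 < |ω| → ψ2 ω = 0)
    (hψ2sum : ∀ ω : ℝ, |ω| ≤ 1 →
      norm (ψ2 (ω - 1)) ^ 2 + norm (ψ2 ω) ^ 2 + norm (ψ2 (ω + 1)) ^ 2 = 1)
    (ξ : Fin d → ℝ)
    (hξ1 : (1 : ℝ) / 8 ≤ |ξ ⟨0, by omega⟩|)
    (hξcone : ∀ i : Fin d, i ≠ ⟨0, by omega⟩ → |ξ i / ξ ⟨0, by omega⟩| ≤ 1) :
    ∑' (j : ℕ) (l : {l : Fin (d - 1) → ℤ // ∀ i, |l i| ≤ 2 ^ j}),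
        norm
          (ψ1 ((4 : ℝ) ^ (-(j : ℤ)) * ξ ⟨0, by omega⟩) *
            ∏ i : Fin (d - 1),
              ψ2 ((-(4 : ℝ) ^ (-(j : ℤ)) * ξ ⟨0, by omega⟩ * (l.1 i : ℝ) +
                    (2 : ℝ) ^ (-(j : ℤ)) * ξ ⟨(i : ℕ) + 1, by have := i.isLt; omega⟩) /
                  ((4 : ℝ) ^ (-(j : ℤ)) * ξ ⟨0, by omega⟩))) ^ 2 = 1 := by
  have hz2 : ∀ ω : ℝ, 1 ≤ |ω| → ψ2 ω = 0 := psi2_boundary hψ2cont hψ2supp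
  have hξ1ne : ξ ⟨0, by omega⟩ ≠ 0 := by
    intro h
    rw [h, abs_zero] at hξ1
    linarith
  have key : ∀ j : ℕ,
      (∑' (l : {l : Fin (d - 1) → ℤ // ∀ i, |l i| ≤ 2 ^ j}),
        norm
          (ψ1 ((4 : ℝ) ^ (-(j : ℤ)) * ξ ⟨0, by omega⟩) *
            ∏ i : Fin (d - 1),
              ψ2 ((-(4 : ℝ) ^ (-(j : ℤ)) * ξ ⟨0, by omega⟩ * (l.1 i : ℝ) +
                    (2 : ℝ) ^ (-(j : ℤ)) * ξ ⟨(i : ℕ) + 1, by have := i.isLt; omega⟩) /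
                  ((4 : ℝ) ^ (-(j : ℤ)) * ξ ⟨0, by omega⟩))) ^ 2)
      = norm (ψ1 ((2 : ℝ) ^ (-(2 * j : ℤ)) * ξ ⟨0, by omega⟩)) ^ 2 := by
    intro j
    have ha : (2 : ℝ) ^ (-(j : ℤ)) ≠ 0 := zpow_ne_zero _ two_ne_zero
    have h4 : (4 : ℝ) ^ (-(j : ℤ)) = (2 : ℝ) ^ (-(j : ℤ)) * (2 : ℝ) ^ (-(j : ℤ)) := by
      rw [show (4 : ℝ) = 2 * 2 by norm_num, mul_zpow]
    have h4ne : (4 : ℝ) ^ (-(j : ℤ)) ≠ 0 := zpow_ne_zero _ (by norm_num)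
    have hb : ((2 : ℝ) ^ (j : ℕ)) = ((2 : ℝ) ^ (-(j : ℤ)))⁻¹ := by
      simp [zpow_neg, zpow_natCast]
    have harg : ∀ (i : Fin (d - 1)) (l : ℤ),
        ((-(4 : ℝ) ^ (-(j : ℤ)) * ξ ⟨0, by omega⟩ * (l : ℝ) +
              (2 : ℝ) ^ (-(j : ℤ)) * ξ ⟨(i : ℕ) + 1, by have := i.isLt; omega⟩) /
            ((4 : ℝ) ^ (-(j : ℤ)) * ξ ⟨0, by omega⟩))
          = (2 : ℝ) ^ (j : ℕ) * (ξ ⟨(i : ℕ) + 1, by have := i.isLt; omega⟩ / ξ ⟨0, by omega⟩)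
              - (l : ℝ) := by
      intro i l
      rw [h4, hb]
      field_simp
      ring
    have hfour : (4 : ℝ) ^ (-(j : ℤ)) = (2 : ℝ) ^ (-(2 * j : ℤ)) := by
      rw [show (4 : ℝ) = (2 : ℝ) ^ (2 : ℤ) by norm_num, ← zpow_mul]
      ring_nf
    letI : Fintype {l : Fin (d - 1) → ℤ // ∀ i, |l i| ≤ 2 ^ j} :=
      Fintype.subtype (Fintype.piFinset fun _ : Fin (d - 1) =>
        Finset.Icc (-(2 ^ j : ℤ)) (2 ^ j))
        (by intro l; simp [Fintype.mem_piFinset, Finset.mem_Icc, abs_le])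
    calc
      (∑' (l : {l : Fin (d - 1) → ℤ // ∀ i, |l i| ≤ 2 ^ j}),
        norm
          (ψ1 ((4 : ℝ) ^ (-(j : ℤ)) * ξ ⟨0, by omega⟩) *
            ∏ i : Fin (d - 1),
              ψ2 ((-(4 : ℝ) ^ (-(j : ℤ)) * ξ ⟨0, by omega⟩ * (l.1 i : ℝ) +
                    (2 : ℝ) ^ (-(j : ℤ)) * ξ ⟨(i : ℕ) + 1, by have := i.isLt; omega⟩) /
                  ((4 : ℝ) ^ (-(j : ℤ)) * ξ ⟨0, by omega⟩))) ^ 2)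
          = ∑' (l : {l : Fin (d - 1) → ℤ // ∀ i, |l i| ≤ 2 ^ j}),
              (norm (ψ1 ((4 : ℝ) ^ (-(j : ℤ)) * ξ ⟨0, by omega⟩)) ^ 2 *
                ∏ i : Fin (d - 1),
                  norm (ψ2 ((2 : ℝ) ^ (j : ℕ) *
                    (ξ ⟨(i : ℕ) + 1, by have := i.isLt; omega⟩ / ξ ⟨0, by omega⟩)
                      - (l.1 i : ℝ))) ^ 2) := by
            apply tsum_congr
            intro l
            simp only [harg, norm_mul, norm_prod, mul_pow, ← Finset.prod_pow]
      _ = norm (ψ1 ((4 : ℝ) ^ (-(j : ℤ)) * ξ ⟨0, by omega⟩)) ^ 2 := by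
            rw [tsum_fintype]
            rw [← Finset.sum_subtype
              (p := fun l : Fin (d - 1) → ℤ => ∀ i, |l i| ≤ 2 ^ j)
              (f := fun l : Fin (d - 1) → ℤ =>
                norm (ψ1 ((4 : ℝ) ^ (-(j : ℤ)) * ξ ⟨0, by omega⟩)) ^ 2 *
                ∏ i : Fin (d - 1),
                  norm (ψ2 ((2 : ℝ) ^ (j : ℕ) *
                    (ξ ⟨(i : ℕ) + 1, by have := i.isLt; omega⟩ / ξ ⟨0, by omega⟩)
                      - (l i : ℝ))) ^ 2)
              (Fintype.piFinset fun _ : Fin (d - 1) =>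
              Finset.Icc (-(2 ^ j : ℤ)) (2 ^ j))
              (by intro l; simp [Fintype.mem_piFinset, Finset.mem_Icc, abs_le])]
            rw [← Finset.mul_sum]
            rw [← Finset.prod_univ_sum
              (fun _ : Fin (d - 1) => Finset.Icc (-(2 ^ j : ℤ)) (2 ^ j))
              (fun (i : Fin (d - 1)) (x : ℤ) =>
                norm (ψ2 ((2 : ℝ) ^ (j : ℕ) *
                  (ξ ⟨(i : ℕ) + 1, by have := i.isLt; omega⟩ / ξ ⟨0, by omega⟩)
                    - (x : ℝ))) ^ 2)]
            have hfac : ∀ i : Fin (d - 1),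
                (∑ x ∈ Finset.Icc (-(2 ^ j : ℤ)) (2 ^ j),
                  norm (ψ2 ((2 : ℝ) ^ (j : ℕ) *
                    (ξ ⟨(i : ℕ) + 1, by have := i.isLt; omega⟩ / ξ ⟨0, by omega⟩)
                      - (x : ℝ))) ^ 2) = 1 := by
              intro i
              apply sum_psi2_sq hz2 hψ2sum
              push_cast
              rw [abs_mul, abs_pow, abs_two]
              calc (2 : ℝ) ^ (j : ℕ) *
                  |ξ ⟨(i : ℕ) + 1, by have := i.isLt; omega⟩ / ξ ⟨0, by omega⟩|
                  ≤ (2 : ℝ) ^ (j : ℕ) * 1 := by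
                    apply mul_le_mul_of_nonneg_left _ (by positivity)
                    exact hξcone _ (by simp [Fin.ext_iff])
                _ = (2 : ℝ) ^ (j : ℕ) := mul_one _
            simp only [hfac]
            simp
      _ = norm (ψ1 ((2 : ℝ) ^ (-(2 * j : ℤ)) * ξ ⟨0, by omega⟩)) ^ 2 := by
            rw [hfour]
  rw [tsum_congr key]
  exact hψ1sum _ hξ1
end

section
/- Let d ≥ 2, β, s ∈ ℝ and 0 < τ < ∞. Set γ = s + (1−β)/τ and u = { |Q_P|^{−s−1/2} }_{P∈𝒬_AB}. Then for every complex sequence s = {s_P}_{P∈𝒬_AB}, ‖s‖_{ℓ^{τ,τ}(u,ν_β)} = ‖s‖_{b^{γ,τ}_τ(AB)} = ‖s‖_{f^{γ,τ}_τ(AB)}; that is, ℓ^{τ,τ}(u,ν_β) = b^{γ,τ}_τ(AB) = f^{γ,τ}_τ(AB) with equal quasi-norms. -/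
open scoped ENNReal NNReal
open MeasureTheory

namespace Shear

/-- Index set `𝒬_AB` of the shearlet system: direction, scale, shear, translation. -/
structure Index (d : ℕ) where
  dir : Fin d
  j : ℕ
  l : Fin (d - 1) → ℤ
  k : Fin d → ℤ
  hl : ∀ i, |l i| ≤ 2 ^ j

/-- Lebesgue measure of the anisotropic cube `Q_P`, namely `2^{-j(d+1)}`. -/
noncomputable def cubeVol {d : ℕ} (P : Index d) : ℝ := (2 : ℝ) ^ (-(P.j : ℤ) * (d + 1))

/-- The inverse anisotropic dilation `A_(𝔡)^{-j}`. -/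
noncomputable def shearAinv (d : ℕ) (𝔡 : Fin d) (j : ℕ) : Matrix (Fin d) (Fin d) ℝ :=
  Matrix.diagonal fun i => if i = 𝔡 then (4 : ℝ) ^ (-(j : ℤ)) else (2 : ℝ) ^ (-(j : ℤ))

/-- The shear matrix `B_(𝔡)^{[ℓ]}`. -/
noncomputable def shearB (d : ℕ) (𝔡 : Fin d) (l : Fin (d - 1) → ℤ) : Matrix (Fin d) (Fin d) ℝ :=
  fun i c =>
    if hic : i = c then 1
    else if hi : i = 𝔡 then
      (if hc : (c : ℕ) < (𝔡 : ℕ) then (l ⟨c, by have := 𝔡.isLt; omega⟩ : ℝ)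
       else (l ⟨(c : ℕ) - 1, by
          have h1 : (𝔡 : ℕ) ≠ (c : ℕ) := fun h => hic (hi.trans (Fin.ext h))
          have := c.isLt; have := 𝔡.isLt; omega⟩ : ℝ))
    else 0

/-- The anisotropic cube `Q_P = A_(𝔡)^{-j} B_(𝔡)^{[-ℓ]} ([0,1)^d + k)`. -/
noncomputable def shearQ {d : ℕ} (P : Index d) : Set (Fin d → ℝ) :=
  (fun y => (shearAinv d P.dir P.j * shearB d P.dir fun i => -P.l i).mulVec y) ''
    {y : Fin d → ℝ | ∀ i, (P.k i : ℝ) ≤ y i ∧ y i < (P.k i : ℝ) + 1}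

/-- The measure `ν_β(Γ) = Σ_{P ∈ Γ} |Q_P|^β`. -/
noncomputable def nu {d : ℕ} (β : ℝ) (Γ : Set (Index d)) : ℝ≥0∞ :=
  ∑' P : Γ, ENNReal.ofReal (cubeVol (P : Index d) ^ β)

/-- The quasi-norm of the shear anisotropic inhomogeneous Besov sequence space `b^{s,q}_p(AB)`
(finite integrability parameters). -/
noncomputable def besovNorm {d : ℕ} (s p q : ℝ) (c : Index d → ℂ) : ℝ≥0∞ :=
  (∑' (𝔡 : Fin d) (j : ℕ) (l : {l : Fin (d - 1) → ℤ // ∀ i, |l i| ≤ 2 ^ j}),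
      (∑' k : Fin d → ℤ,
          (ENNReal.ofReal (((2 : ℝ) ^ (-(j : ℤ) * (d + 1))) ^ (-s + 1 / p - 1 / 2)) *
              (‖c ⟨𝔡, j, l.1, k, l.2⟩‖₊ : ℝ≥0∞)) ^ p) ^ (q / p)) ^ (1 / q)

/-- The quasi-norm of the shear anisotropic inhomogeneous Triebel–Lizorkin sequence space
`f^{s,q}_p(AB)`, `0 < q ≤ ∞`. -/
noncomputable def tlNorm {d : ℕ} (s p : ℝ) (q : ℝ≥0∞) (c : Index d → ℂ) : ℝ≥0∞ :=
  (∫⁻ x : Fin d → ℝ,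
      (if q = ∞ then
          ⨆ P : Index d,
            ENNReal.ofReal (cubeVol P ^ (-s - 1 / 2)) * (‖c P‖₊ : ℝ≥0∞) *
              (shearQ P).indicator (fun _ => (1 : ℝ≥0∞)) x
        else
          (∑' P : Index d,
              (ENNReal.ofReal (cubeVol P ^ (-s - 1 / 2)) * (‖c P‖₊ : ℝ≥0∞) *
                  (shearQ P).indicator (fun _ => (1 : ℝ≥0∞)) x) ^ q.toReal) ^ (1 / q.toReal)) ^ p)
    ^ (1 / p)

/-- Non-increasing rearrangement of a sequence with respect to a (set-function) measure `ν`. -/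
noncomputable def rearr {D : Type*} (ν : Set D → ℝ≥0∞) (c : D → ℂ) (t : ℝ≥0∞) : ℝ≥0∞ :=
  sInf {lam : ℝ≥0∞ | ν {I | lam < (‖c I‖₊ : ℝ≥0∞)} ≤ t}

/-- Quasi-norm of the weighted discrete Lorentz space `ℓ^{p,μ}(u,ν)`. -/
noncomputable def lorentzNorm {D : Type*} (ν : Set D → ℝ≥0∞) (u : D → ℝ) (p : ℝ) (μ : ℝ≥0∞)
    (c : D → ℂ) : ℝ≥0∞ :=
  if μ = ∞ then
    ⨆ t : {t : ℝ // 0 < t},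
      ENNReal.ofReal (t.1 ^ (1 / p)) * rearr ν (fun I => (u I : ℂ) * c I) (ENNReal.ofReal t.1)
  else
    (∫⁻ t in Set.Ioi (0 : ℝ),
        (ENNReal.ofReal (t ^ (1 / p)) *
              rearr ν (fun I => (u I : ℂ) * c I) (ENNReal.ofReal t)) ^ μ.toReal /
          ENNReal.ofReal t) ^ (1 / μ.toReal)

/-- `Σ_{t,ν}`: sequences supported on a set `Γ` with `ν(Γ) ≤ t`. -/
def SigmaSet {D : Type*} (ν : Set D → ℝ≥0∞) (t : ℝ≥0∞) : Set (D → ℂ) :=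
  {c | ∃ Γ : Set D, ν Γ ≤ t ∧ ∀ P ∉ Γ, c P = 0}

/-- Restricted approximation error `σ_ν(t,s)_𝔣`. -/
noncomputable def approxErr {D : Type*} (F : (D → ℂ) → ℝ≥0∞) (ν : Set D → ℝ≥0∞) (t : ℝ≥0∞)
    (s : D → ℂ) : ℝ≥0∞ :=
  ⨅ c ∈ SigmaSet ν t, F (fun P => s P - c P)

/-- Quasi-norm of the restricted approximation space `A^ξ_μ(𝔣,ν)`. -/
noncomputable def approxNorm {D : Type*} (F : (D → ℂ) → ℝ≥0∞) (ν : Set D → ℝ≥0∞) (ξ : ℝ)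
    (μ : ℝ≥0∞) (s : D → ℂ) : ℝ≥0∞ :=
  if μ = ∞ then
    ⨆ t : {t : ℝ // 0 < t}, ENNReal.ofReal (t.1 ^ ξ) * approxErr F ν (ENNReal.ofReal t.1) s
  else
    (∫⁻ t in Set.Ioi (0 : ℝ),
        (ENNReal.ofReal (t ^ ξ) * approxErr F ν (ENNReal.ofReal t) s) ^ μ.toReal /
          ENNReal.ofReal t) ^ (1 / μ.toReal)

/-- Peetre `K`-functional for a couple of quasi-normed sequence spaces. -/
noncomputable def Kfun {D : Type*} (X Y : (D → ℂ) → ℝ≥0∞) (t : ℝ≥0∞) (s : D → ℂ) : ℝ≥0∞ :=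
  ⨅ a : D → ℂ, X a + t * Y (fun P => s P - a P)

/-- Quasi-norm of the real interpolation space `(X,Y)_{θ,q}`. -/
noncomputable def interpNorm {D : Type*} (X Y : (D → ℂ) → ℝ≥0∞) (θ : ℝ) (q : ℝ≥0∞)
    (s : D → ℂ) : ℝ≥0∞ :=
  if q = ∞ then
    ⨆ t : {t : ℝ // 0 < t}, ENNReal.ofReal (t.1 ^ (-θ)) * Kfun X Y (ENNReal.ofReal t.1) s
  else
    (∫⁻ t in Set.Ioi (0 : ℝ),
        (ENNReal.ofReal (t ^ (-θ)) * Kfun X Y (ENNReal.ofReal t) s) ^ q.toReal /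
          ENNReal.ofReal t) ^ (1 / q.toReal)

end Shear


namespace Shear

instance {d : ℕ} : Countable (Index d) := by
  have : Function.Injective (fun P : Index d => (P.dir, P.j, P.l, P.k)) := by
    rintro ⟨a1,a2,a3,a4,a5⟩ ⟨b1,b2,b3,b4,b5⟩ h
    simp only [Prod.mk.injEq] at h
    obtain ⟨h1,h2,h3,h4⟩ := h
    subst h1; subst h2; subst h3; subst h4; rfl
  exact this.countable

lemma det_shearB {d : ℕ} (hd : 2 ≤ d) (𝔡 : Fin d) (l : Fin (d - 1) → ℤ) :
    (shearB d 𝔡 l).det = 1 := by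
  classical
  have hB : shearB d 𝔡 l = Matrix.updateRow 1 𝔡
      ((fun c => if 𝔡 = c then (1:ℝ) else 0) + (fun c => if 𝔡 = c then 0 else shearB d 𝔡 l 𝔡 c)) := by
    ext i c
    rw [Matrix.updateRow_apply]
    by_cases hi : i = 𝔡
    · subst hi
      rw [if_pos rfl]
      by_cases hc : i = c
      · subst hc; simp [shearB]
      · simp only [Pi.add_apply]
        rw [if_neg hc, if_neg hc]
        simp
    · rw [if_neg hi]
      by_cases hc : i = c
      · subst hc; simp [shearB, Matrix.one_apply]
      · simp [shearB, hc, hi, Matrix.one_apply]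
  rw [hB, Matrix.det_updateRow_add]
  have h1 : Matrix.updateRow (1 : Matrix (Fin d) (Fin d) ℝ) 𝔡 (fun c => if 𝔡 = c then (1:ℝ) else 0)
      = 1 := by
    ext i c
    rw [Matrix.updateRow_apply]
    by_cases hi : i = 𝔡
    · subst hi; rw [if_pos rfl, Matrix.one_apply]
    · rw [if_neg hi]
  have h2 : (Matrix.updateRow (1 : Matrix (Fin d) (Fin d) ℝ) 𝔡
      (fun c => if 𝔡 = c then 0 else shearB d 𝔡 l 𝔡 c)).det = 0 := by
    apply Matrix.det_eq_zero_of_column_eq_zero 𝔡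
    intro i
    rw [Matrix.updateRow_apply]
    by_cases hi : i = 𝔡
    · subst hi; rw [if_pos rfl, if_pos rfl]
    · rw [if_neg hi, Matrix.one_apply, if_neg hi]
  rw [h1, h2, Matrix.det_one, add_zero]

lemma det_mat {d : ℕ} (hd : 2 ≤ d) (P : Index d) :
    (shearAinv d P.dir P.j * shearB d P.dir fun i => -P.l i).det = cubeVol P := by
  rw [Matrix.det_mul, det_shearB hd, mul_one, shearAinv, Matrix.det_diagonal]
  classical
  rw [← Finset.mul_prod_erase Finset.univ _ (Finset.mem_univ P.dir)]
  rw [if_pos rfl]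
  have h2 : ∀ i ∈ Finset.univ.erase P.dir,
      (if i = P.dir then (4:ℝ) ^ (-(P.j:ℤ)) else (2:ℝ) ^ (-(P.j:ℤ))) = (2:ℝ) ^ (-(P.j:ℤ)) := by
    intro i hi
    rw [if_neg (Finset.mem_erase.1 hi).1]
  rw [Finset.prod_congr rfl h2, Finset.prod_const]
  rw [Finset.card_erase_of_mem (Finset.mem_univ _), Finset.card_univ, Fintype.card_fin]
  have h4 : (4:ℝ) ^ (-(P.j:ℤ)) = (2:ℝ) ^ (-2 * (P.j:ℤ)) := by
    have : (4:ℝ) = (2:ℝ) ^ (2:ℤ) := by norm_num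
    rw [this, ← zpow_mul]
    ring_nf
  rw [h4, ← zpow_natCast ((2:ℝ) ^ (-(P.j:ℤ))), ← zpow_mul, ← zpow_add₀ (by norm_num : (2:ℝ) ≠ 0)]
  rw [cubeVol]
  congr 1
  have : ((d - 1 : ℕ) : ℤ) = (d : ℤ) - 1 := by omega
  rw [this]; ring

lemma cubeVol_pos {d : ℕ} (P : Index d) : 0 < cubeVol P := by
  rw [cubeVol]; positivity

lemma box_eq {d : ℕ} (k : Fin d → ℤ) :
    {y : Fin d → ℝ | ∀ i, (k i : ℝ) ≤ y i ∧ y i < (k i : ℝ) + 1}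
      = Set.univ.pi (fun i => Set.Ico (k i : ℝ) ((k i : ℝ) + 1)) := by
  ext y; simp [Set.mem_pi, Set.mem_Ico]

lemma volume_box {d : ℕ} (k : Fin d → ℤ) :
    volume {y : Fin d → ℝ | ∀ i, (k i : ℝ) ≤ y i ∧ y i < (k i : ℝ) + 1} = 1 := by
  rw [box_eq, volume_pi_pi]
  simp [Real.volume_Ico]

lemma volume_shearQ {d : ℕ} (hd : 2 ≤ d) (P : Index d) :
    volume (shearQ P) = ENNReal.ofReal (cubeVol P) := by
  rw [shearQ]
  have hfun : (fun y : Fin d → ℝ =>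
      (shearAinv d P.dir P.j * shearB d P.dir fun i => -P.l i).mulVec y)
      = ⇑(Matrix.toLin' (shearAinv d P.dir P.j * shearB d P.dir fun i => -P.l i)) := by
    funext y; rw [Matrix.toLin'_apply]
  rw [hfun, Measure.addHaar_image_linearMap, LinearMap.det_toLin', det_mat hd, volume_box,
    mul_one, abs_of_pos (cubeVol_pos P)]

lemma measurableSet_shearQ {d : ℕ} (hd : 2 ≤ d) (P : Index d) :
    MeasurableSet (shearQ P) := by
  classical
  set M := shearAinv d P.dir P.j * shearB d P.dir fun i => -P.l i with hM
  have hdet : IsUnit M.det := by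
    rw [hM, det_mat hd]
    exact (cubeVol_pos P).ne'.isUnit
  let e : (Fin d → ℝ) ≃ₗ[ℝ] (Fin d → ℝ) :=
    Matrix.toLinearEquiv' M (M.invertibleOfIsUnitDet hdet)
  have he : Continuous ⇑e := e.toLinearMap.continuous_of_finiteDimensional
  have hes : Continuous ⇑e.symm := e.symm.toLinearMap.continuous_of_finiteDimensional
  let h : (Fin d → ℝ) ≃ₜ (Fin d → ℝ) := ⟨e.toEquiv, he, hes⟩
  have hQ : shearQ P = ⇑h '' {y : Fin d → ℝ | ∀ i, (P.k i : ℝ) ≤ y i ∧ y i < (P.k i : ℝ) + 1} := by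
    rw [shearQ]
    congr 1
  rw [hQ]
  exact h.measurableEmbedding.measurableSet_image.2
    (by rw [box_eq]; exact MeasurableSet.univ_pi fun i => measurableSet_Ico)


lemma nu_indicator {d : ℕ} (β : ℝ) (Γ : Set (Index d)) :
    nu β Γ = ∑' P : Index d, Γ.indicator (fun P => ENNReal.ofReal (cubeVol P ^ β)) P := by
  rw [nu]
  exact tsum_subtype Γ (fun P => ENNReal.ofReal (cubeVol P ^ β))

end Shear

set_option linter.unusedSectionVars false

section Master
variable {D : Type*} [Countable D] (w : D → ℝ≥0∞) (g : D → ℂ)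

/-- distribution function -/
noncomputable def distr (lam : ℝ≥0∞) : ℝ≥0∞ :=
  ∑' P, ({I | lam < (‖g I‖₊ : ℝ≥0∞)}).indicator w P

lemma distr_antitone : Antitone (distr w g) := by
  intro a b hab
  refine ENNReal.tsum_le_tsum fun P => Set.indicator_le_indicator_of_subset ?_ (fun _ => zero_le) _
  intro I hI
  exact lt_of_le_of_lt hab hI

lemma distr_right_cts {lam t : ℝ≥0∞} (h : ∀ μ, lam < μ → distr w g μ ≤ t) :
    distr w g lam ≤ t := by
  rw [distr, ENNReal.tsum_eq_iSup_sum]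
  refine iSup_le fun F => ?_
  classical
  set F' := F.filter (fun P => lam < (‖g P‖₊ : ℝ≥0∞)) with hF'
  rcases F'.eq_empty_or_nonempty with hne | hne
  · have : ∑ P ∈ F, ({I | lam < (‖g I‖₊ : ℝ≥0∞)}).indicator w P = 0 := by
      refine Finset.sum_eq_zero fun P hP => ?_
      have hnot : P ∉ {I | lam < (‖g I‖₊ : ℝ≥0∞)} := fun hmem => by
        have : P ∈ F' := Finset.mem_filter.2 ⟨hP, hmem⟩
        rw [hne] at this; exact absurd this (Finset.notMem_empty P)
      exact Set.indicator_of_notMem hnot w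
    rw [this]; exact zero_le
  · obtain ⟨P₀, hP₀mem, hP₀⟩ := F'.exists_min_image (fun P => (‖g P‖₊ : ℝ≥0∞)) hne
    have hlam : lam < (‖g P₀‖₊ : ℝ≥0∞) := (Finset.mem_filter.1 hP₀mem).2
    obtain ⟨μ, hμ1, hμ2⟩ := exists_between hlam
    refine le_trans ?_ (h μ hμ1)
    rw [distr, ENNReal.tsum_eq_iSup_sum]
    refine le_trans ?_ (le_iSup _ F)
    refine Finset.sum_le_sum fun P hP => ?_
    by_cases hmem : lam < (‖g P‖₊ : ℝ≥0∞)
    · have hP' : P ∈ F' := Finset.mem_filter.2 ⟨hP, hmem⟩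
      have : μ < (‖g P‖₊ : ℝ≥0∞) := lt_of_lt_of_le hμ2 (hP₀ P hP')
      simp only [Set.indicator_apply, Set.mem_setOf_eq]
      rw [if_pos hmem, if_pos this]
    · simp only [Set.indicator_apply, Set.mem_setOf_eq]
      rw [if_neg hmem]; exact zero_le

lemma rearr_lt_iff (ν : Set D → ℝ≥0∞)
    (hν : ∀ Γ, ν Γ = ∑' P, Γ.indicator w P) {lam t : ℝ≥0∞} :
    lam < Shear.rearr ν g t ↔ t < distr w g lam := by
  have hd : ∀ μ : ℝ≥0∞, ν {I | μ < (‖g I‖₊ : ℝ≥0∞)} = distr w g μ := fun μ => hν _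
  constructor
  · intro h
    by_contra hc
    push_neg at hc
    have : Shear.rearr ν g t ≤ lam := sInf_le (by rw [Set.mem_setOf_eq, hd]; exact hc)
    exact absurd h (not_lt.2 this)
  · intro h
    have hex : ∃ μ, lam < μ ∧ t < distr w g μ := by
      by_contra hc
      push_neg at hc
      exact absurd (distr_right_cts w g fun μ hμ => hc μ hμ) (not_le.2 h)
    obtain ⟨μ, hμ1, hμ2⟩ := hex
    refine lt_of_lt_of_le hμ1 (le_sInf fun σ hσ => ?_)
    rw [Set.mem_setOf_eq, hd] at hσ
    by_contra hσμ
    push_neg at hσμ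
    exact absurd (le_trans (distr_antitone w g hσμ.le) hσ) (not_le.2 hμ2)

lemma lint_ind (a : ℝ≥0∞) :
    ∫⁻ x in Set.Ioi (0:ℝ), (if ENNReal.ofReal x < a then (1:ℝ≥0∞) else 0) = a := by
  have hms : MeasurableSet {y : ℝ | ENNReal.ofReal y < a} :=
    ENNReal.measurable_ofReal measurableSet_Iio
  have : ∀ x : ℝ, (if ENNReal.ofReal x < a then (1:ℝ≥0∞) else 0)
      = ({y : ℝ | ENNReal.ofReal y < a}).indicator (fun _ => (1:ℝ≥0∞)) x := by
    intro x; rw [Set.indicator_apply]; rfl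
  simp only [this]
  rw [lintegral_indicator hms, setLIntegral_one, Measure.restrict_apply hms]
  rcases eq_or_ne a ∞ with ha | ha
  · have : {y : ℝ | ENNReal.ofReal y < a} = Set.univ := by
      ext y; simp [ha, ENNReal.ofReal_lt_top]
    rw [this, Set.univ_inter, ha, Real.volume_Ioi]
  · have : {y : ℝ | ENNReal.ofReal y < a} ∩ Set.Ioi 0 = Set.Ioo 0 a.toReal := by
      ext y
      simp only [Set.mem_inter_iff, Set.mem_setOf_eq, Set.mem_Ioi, Set.mem_Ioo]
      constructor
      · rintro ⟨h1, h2⟩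
        exact ⟨h2, (ENNReal.ofReal_lt_iff_lt_toReal h2.le ha).1 h1⟩
      · rintro ⟨h1, h2⟩
        exact ⟨(ENNReal.ofReal_lt_iff_lt_toReal h1.le ha).2 h2, h1⟩
    rw [this, Real.volume_Ioo, sub_zero, ENNReal.ofReal_toReal ha]

lemma master (ν : Set D → ℝ≥0∞) (hν : ∀ Γ, ν Γ = ∑' P, Γ.indicator w P)
    {τ : ℝ} (hτ : 0 < τ) :
    ∫⁻ t in Set.Ioi (0:ℝ), (Shear.rearr ν g (ENNReal.ofReal t)) ^ τ
      = ∑' P, w P * ((‖g P‖₊ : ℝ≥0∞)) ^ τ := by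
  set R : ℝ → ℝ≥0∞ := fun t => Shear.rearr ν g (ENNReal.ofReal t) with hR
  have hRanti : Antitone R := by
    intro a b hab
    exact sInf_le_sInf fun μ hμ => le_trans hμ (ENNReal.ofReal_le_ofReal hab)
  have hFanti : Antitone (fun t => R t ^ τ) := fun a b hab =>
    ENNReal.rpow_le_rpow (hRanti hab) hτ.le
  have hFmeas : Measurable (fun t => R t ^ τ) := hFanti.measurable
  -- key pointwise equivalence
  have hkey : ∀ (lam t : ℝ), (ENNReal.ofReal lam < R t ^ τ
      ↔ ENNReal.ofReal t < distr w g ((ENNReal.ofReal lam) ^ (1/τ))) := by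
    intro lam t
    have h1 : ENNReal.ofReal lam < R t ^ τ
        ↔ (ENNReal.ofReal lam) ^ (1/τ) < R t := by
      rw [← ENNReal.rpow_lt_rpow_iff (z := 1/τ) (by positivity),
        ← ENNReal.rpow_mul, mul_one_div, div_self hτ.ne', ENNReal.rpow_one]
    rw [h1, hR]
    exact rearr_lt_iff w g ν hν
  calc ∫⁻ t in Set.Ioi (0:ℝ), R t ^ τ
      = ∫⁻ t in Set.Ioi (0:ℝ), ∫⁻ lam in Set.Ioi (0:ℝ),
          (if ENNReal.ofReal lam < R t ^ τ then (1:ℝ≥0∞) else 0) := by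
        congr 1; funext t; exact (lint_ind _).symm
    _ = ∫⁻ lam in Set.Ioi (0:ℝ), ∫⁻ t in Set.Ioi (0:ℝ),
          (if ENNReal.ofReal lam < R t ^ τ then (1:ℝ≥0∞) else 0) := by
        apply lintegral_lintegral_swap
        apply Measurable.aemeasurable
        apply Measurable.ite _ measurable_const measurable_const
        exact measurableSet_lt (ENNReal.measurable_ofReal.comp measurable_snd)
          (hFmeas.comp measurable_fst)
    _ = ∫⁻ lam in Set.Ioi (0:ℝ), distr w g ((ENNReal.ofReal lam) ^ (1/τ)) := by
        congr 1; funext lam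
        have : ∀ t : ℝ, (if ENNReal.ofReal lam < R t ^ τ then (1:ℝ≥0∞) else 0)
            = (if ENNReal.ofReal t < distr w g ((ENNReal.ofReal lam) ^ (1/τ))
                then (1:ℝ≥0∞) else 0) := by
          intro t
          by_cases h : ENNReal.ofReal lam < R t ^ τ
          · rw [if_pos h, if_pos ((hkey lam t).1 h)]
          · rw [if_neg h, if_neg (fun hc => h ((hkey lam t).2 hc))]
        simp only [this]
        exact lint_ind _
    _ = ∑' P, w P * ((‖g P‖₊ : ℝ≥0∞)) ^ τ := by
        have hrw : ∀ lam : ℝ, distr w g ((ENNReal.ofReal lam) ^ (1/τ))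
            = ∑' P, w P * (if ENNReal.ofReal lam < (‖g P‖₊ : ℝ≥0∞) ^ τ then (1:ℝ≥0∞) else 0) := by
          intro lam
          rw [distr]
          congr 1; funext P
          have h1 : (ENNReal.ofReal lam) ^ (1/τ) < (‖g P‖₊ : ℝ≥0∞)
              ↔ ENNReal.ofReal lam < (‖g P‖₊ : ℝ≥0∞) ^ τ := by
            constructor
            · intro h
              have := ENNReal.rpow_lt_rpow h hτ
              rwa [← ENNReal.rpow_mul, one_div, inv_mul_cancel₀ hτ.ne',
                ENNReal.rpow_one] at this
            · intro h
              have := ENNReal.rpow_lt_rpow h (by positivity : (0:ℝ) < 1/τ)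
              rwa [← ENNReal.rpow_mul, mul_one_div, div_self hτ.ne',
                ENNReal.rpow_one] at this
          rw [Set.indicator_apply]
          simp only [Set.mem_setOf_eq]
          by_cases h : ENNReal.ofReal lam < (‖g P‖₊ : ℝ≥0∞) ^ τ
          · rw [if_pos (h1.2 h), if_pos h, mul_one]
          · rw [if_neg (fun hc => h (h1.1 hc)), if_neg h, mul_zero]
        simp only [hrw]
        rw [lintegral_tsum]
        · congr 1; funext P
          rw [lintegral_const_mul, lint_ind]
          apply Measurable.ite _ measurable_const measurable_const
          exact ENNReal.measurable_ofReal measurableSet_Iio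
        · intro P
          apply Measurable.aemeasurable
          apply Measurable.const_mul
          apply Measurable.ite _ measurable_const measurable_const
          exact ENNReal.measurable_ofReal measurableSet_Iio

end Master


noncomputable def besovEquiv (d : ℕ) :
    (Σ (_𝔡 : Fin d) (j : ℕ) (_l : {l : Fin (d - 1) → ℤ // ∀ i, |l i| ≤ 2 ^ j}), (Fin d → ℤ))
      ≃ Shear.Index d where
  toFun σ := ⟨σ.1, σ.2.1, σ.2.2.1.1, σ.2.2.2, σ.2.2.1.2⟩
  invFun P := ⟨P.dir, P.j, ⟨P.l, P.hl⟩, P.k⟩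
  left_inv σ := rfl
  right_inv P := rfl

/-- Lemma 2.6 of the paper: for `γ = s + (1−β)/τ` and `u_P = |Q_P|^{−s−1/2}`, the weighted
discrete Lorentz space `ℓ^{τ,τ}(u,ν_β)` coincides with `b^{γ,τ}_τ(AB) = f^{γ,τ}_τ(AB)`
with equal quasi-norms. -/
theorem lorentz_eq_besov_eq_tl (d : ℕ) (hd : 2 ≤ d) (β s τ : ℝ) (hτ : 0 < τ)
    (c : Shear.Index d → ℂ) :
    Shear.lorentzNorm (Shear.nu (d := d) β) (fun P => Shear.cubeVol P ^ (-s - 1 / 2)) τ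
        (ENNReal.ofReal τ) c
      = Shear.besovNorm (s + (1 - β) / τ) τ τ c ∧
    Shear.besovNorm (s + (1 - β) / τ) τ τ c
      = Shear.tlNorm (s + (1 - β) / τ) τ (ENNReal.ofReal τ) c := by
  classical
  have hτ' : τ ≠ 0 := hτ.ne'
  set γ := s + (1 - β) / τ with hγ
  set S : ℝ → ℝ≥0∞ := fun e => ∑' P : Shear.Index d,
    ENNReal.ofReal (Shear.cubeVol P ^ e) * (‖c P‖₊ : ℝ≥0∞) ^ τ with hS
  -- Lorentz side
  have hLor : Shear.lorentzNorm (Shear.nu (d := d) β)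
      (fun P => Shear.cubeVol P ^ (-s - 1 / 2)) τ (ENNReal.ofReal τ) c
      = S (β + (-s - 1 / 2) * τ) ^ (1 / τ) := by
    rw [Shear.lorentzNorm, if_neg ENNReal.ofReal_ne_top, ENNReal.toReal_ofReal hτ.le]
    congr 1
    set g : Shear.Index d → ℂ :=
      fun I => ((Shear.cubeVol I ^ (-s - 1 / 2) : ℝ) : ℂ) * c I with hg
    have hstep : ∫⁻ t in Set.Ioi (0:ℝ),
        (ENNReal.ofReal (t ^ (1 / τ)) * Shear.rearr (Shear.nu β) g (ENNReal.ofReal t)) ^ τ /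
          ENNReal.ofReal t
        = ∫⁻ t in Set.Ioi (0:ℝ), (Shear.rearr (Shear.nu β) g (ENNReal.ofReal t)) ^ τ := by
      refine setLIntegral_congr_fun measurableSet_Ioi (fun t ht => ?_)
      rw [Set.mem_Ioi] at ht
      rw [ENNReal.mul_rpow_of_nonneg _ _ hτ.le,
        ENNReal.ofReal_rpow_of_pos (Real.rpow_pos_of_pos ht _),
        ← Real.rpow_mul ht.le, one_div, inv_mul_cancel₀ hτ', Real.rpow_one,
        mul_comm, mul_div_assoc,
        ENNReal.div_self (ENNReal.ofReal_pos.2 ht).ne' ENNReal.ofReal_ne_top, mul_one]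
    rw [hstep, master (fun P => ENNReal.ofReal (Shear.cubeVol P ^ β)) g (Shear.nu β)
      (fun Γ => Shear.nu_indicator β Γ) hτ]
    refine tsum_congr fun P => ?_
    have hv : (0:ℝ) < Shear.cubeVol P := Shear.cubeVol_pos P
    have hu : (0:ℝ) < Shear.cubeVol P ^ (-s - 1 / 2) := Real.rpow_pos_of_pos hv _
    have hng : (‖g P‖₊ : ℝ≥0∞)
        = ENNReal.ofReal (Shear.cubeVol P ^ (-s - 1 / 2)) * (‖c P‖₊ : ℝ≥0∞) := by
      rw [hg]
      simp only [nnnorm_mul, ENNReal.coe_mul, Complex.nnnorm_real]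
      rw [show ((‖(Shear.cubeVol P ^ (-s - 1 / 2) : ℝ)‖₊ : ℝ≥0∞)) = ENNReal.ofReal _ from Real.enorm_eq_ofReal hu.le]
    rw [hng, ENNReal.mul_rpow_of_nonneg _ _ hτ.le,
      ENNReal.ofReal_rpow_of_pos hu, ← Real.rpow_mul hv.le, ← mul_assoc,
      ← ENNReal.ofReal_mul (Real.rpow_nonneg hv.le _), ← Real.rpow_add hv]
  -- Besov side
  have hBes : Shear.besovNorm γ τ τ c = S ((-γ + 1 / τ - 1 / 2) * τ) ^ (1 / τ) := by
    rw [Shear.besovNorm]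
    congr 1
    have h1 : τ / τ = (1:ℝ) := div_self hτ'
    simp only [h1, ENNReal.rpow_one]
    rw [hS]
    show _ = ∑' P : Shear.Index d,
      ENNReal.ofReal (Shear.cubeVol P ^ ((-γ + 1 / τ - 1 / 2) * τ)) * (‖c P‖₊ : ℝ≥0∞) ^ τ
    rw [← Equiv.tsum_eq (besovEquiv d)
      (fun P => ENNReal.ofReal (Shear.cubeVol P ^ ((-γ + 1 / τ - 1 / 2) * τ)) *
        (‖c P‖₊ : ℝ≥0∞) ^ τ)]
    simp only [ENNReal.tsum_sigma']
    refine tsum_congr fun 𝔡 => tsum_congr fun j => tsum_congr fun l => tsum_congr fun k => ?_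
    show (ENNReal.ofReal (((2 : ℝ) ^ (-(j : ℤ) * (d + 1))) ^ (-γ + 1 / τ - 1 / 2)) *
        (‖c ⟨𝔡, j, l.1, k, l.2⟩‖₊ : ℝ≥0∞)) ^ τ
      = ENNReal.ofReal (Shear.cubeVol ⟨𝔡, j, l.1, k, l.2⟩ ^ ((-γ + 1 / τ - 1 / 2) * τ)) *
        (‖c ⟨𝔡, j, l.1, k, l.2⟩‖₊ : ℝ≥0∞) ^ τ
    have hv : (0:ℝ) < (2 : ℝ) ^ (-(j : ℤ) * (d + 1)) := by positivity
    have hcv : Shear.cubeVol ⟨𝔡, j, l.1, k, l.2⟩ = (2 : ℝ) ^ (-(j : ℤ) * (d + 1)) := rfl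
    rw [hcv, ENNReal.mul_rpow_of_nonneg _ _ hτ.le,
      ENNReal.ofReal_rpow_of_pos (Real.rpow_pos_of_pos hv _), ← Real.rpow_mul hv.le]
  -- Triebel-Lizorkin side
  have hTl : Shear.tlNorm γ τ (ENNReal.ofReal τ) c = S ((-γ - 1 / 2) * τ + 1) ^ (1 / τ) := by
    rw [Shear.tlNorm]
    simp only [ENNReal.ofReal_ne_top, if_false, ENNReal.toReal_ofReal hτ.le]
    congr 1
    have hint : ∀ x : Fin d → ℝ,
        ((∑' P : Shear.Index d,
            (ENNReal.ofReal (Shear.cubeVol P ^ (-γ - 1 / 2)) * (‖c P‖₊ : ℝ≥0∞) *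
              (Shear.shearQ P).indicator (fun _ => (1:ℝ≥0∞)) x) ^ τ) ^ (1 / τ)) ^ τ
        = ∑' P : Shear.Index d,
            (ENNReal.ofReal (Shear.cubeVol P ^ (-γ - 1 / 2)) * (‖c P‖₊ : ℝ≥0∞) *
              (Shear.shearQ P).indicator (fun _ => (1:ℝ≥0∞)) x) ^ τ := fun x => by
      rw [← ENNReal.rpow_mul, one_div_mul_cancel hτ', ENNReal.rpow_one]
    simp only [hint]
    rw [lintegral_tsum (f := fun P x => (ENNReal.ofReal (Shear.cubeVol P ^ (-γ - 1 / 2)) * (‖c P‖₊ : ℝ≥0∞) *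
        (Shear.shearQ P).indicator (fun _ => (1:ℝ≥0∞)) x) ^ τ) fun P => (((measurable_const.mul
      (measurable_const.indicator (Shear.measurableSet_shearQ hd P)))).pow_const τ).aemeasurable]
    refine tsum_congr fun P => ?_
    have hv : (0:ℝ) < Shear.cubeVol P := Shear.cubeVol_pos P
    have h1 : ∀ x : Fin d → ℝ,
        (ENNReal.ofReal (Shear.cubeVol P ^ (-γ - 1 / 2)) * (‖c P‖₊ : ℝ≥0∞) *
            (Shear.shearQ P).indicator (fun _ => (1:ℝ≥0∞)) x) ^ τ
        = (ENNReal.ofReal (Shear.cubeVol P ^ (-γ - 1 / 2)) ^ τ * (‖c P‖₊ : ℝ≥0∞) ^ τ) *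
            (Shear.shearQ P).indicator (fun _ => (1:ℝ≥0∞)) x := by
      intro x
      rw [ENNReal.mul_rpow_of_nonneg _ _ hτ.le, ENNReal.mul_rpow_of_nonneg _ _ hτ.le]
      congr 1
      by_cases hx : x ∈ Shear.shearQ P
      · rw [Set.indicator_of_mem hx, ENNReal.one_rpow]
      · rw [Set.indicator_of_notMem hx, ENNReal.zero_rpow_of_pos hτ]
    simp only [h1]
    rw [lintegral_const_mul _ (measurable_const.indicator (Shear.measurableSet_shearQ hd P)),
      lintegral_indicator (Shear.measurableSet_shearQ hd P), setLIntegral_one,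
      Shear.volume_shearQ hd P]
    rw [ENNReal.ofReal_rpow_of_pos (Real.rpow_pos_of_pos hv _), ← Real.rpow_mul hv.le,
      mul_right_comm,
      show ENNReal.ofReal (Shear.cubeVol P) = ENNReal.ofReal (Shear.cubeVol P ^ (1:ℝ)) by
        rw [Real.rpow_one],
      ← ENNReal.ofReal_mul (Real.rpow_nonneg hv.le _), ← Real.rpow_add hv]
  have hexp1 : β + (-s - 1 / 2) * τ = (-γ + 1 / τ - 1 / 2) * τ := by
    rw [hγ]; field_simp; ring
  have hexp2 : (-γ - 1 / 2) * τ + 1 = (-γ + 1 / τ - 1 / 2) * τ := by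
    field_simp; ring
  refine ⟨?_, ?_⟩
  · rw [hLor, hBes, hexp1]
  · rw [hBes, hTl, hexp2]
end

section
/- Let d ≥ 2 and γ > (d−1)/(d+1). Let Γ ⊂ 𝒬_AB and define S^γ_Γ(x) = Σ_{P∈Γ} |Q_P|^γ χ_{Q_P}(x). Let x ∈ ℝ^d be such that the set { |Q_P| : P ∈ Γ, x ∈ Q_P } is nonempty and attains its maximum at some P^x ∈ Γ (i.e. x ∈ Q_{P^x} and |Q_P| ≤ |Q_{P^x}| for every P ∈ Γ with x ∈ Q_P). Then |Q_{P^x}|^γ ≤ S^γ_Γ(x) ≤ C |Q_{P^x}|^{γ − (d−1)/(d+1)}, where C > 0 depends only on d and γ. -/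
open scoped ENNReal NNReal
open MeasureTheory

section ShearAux

open Shear Function
open scoped Classical

variable {d : ℕ}

lemma shearB_mulVec_ne (𝔡 : Fin d) (l : Fin (d - 1) → ℤ) (v : Fin d → ℝ) {i : Fin d}
    (hi : i ≠ 𝔡) : (shearB d 𝔡 l).mulVec v i = v i := by
  have h : (shearB d 𝔡 l).mulVec v i = ∑ c, shearB d 𝔡 l i c * v c := by
    simp [Matrix.mulVec, dotProduct]
  rw [h, Finset.sum_eq_single i]
  · simp [shearB]
  · intro c _ hc
    have hic : i ≠ c := fun hh => hc hh.symm
    simp [shearB, hic, hi]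
  · simp

lemma shearB_mulVec_d (𝔡 : Fin d) (l : Fin (d - 1) → ℤ) (v : Fin d → ℝ) :
    (shearB d 𝔡 l).mulVec v 𝔡
      = v 𝔡 + ∑ c ∈ Finset.univ.erase 𝔡, shearB d 𝔡 l 𝔡 c * v c := by
  have h : (shearB d 𝔡 l).mulVec v 𝔡 = ∑ c, shearB d 𝔡 l 𝔡 c * v c := by
    simp [Matrix.mulVec, dotProduct]
  rw [h, ← Finset.add_sum_erase _ _ (Finset.mem_univ 𝔡)]
  simp [shearB]

lemma shearB_mulVec_injective (𝔡 : Fin d) (l : Fin (d - 1) → ℤ) :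
    Function.Injective ((shearB d 𝔡 l).mulVec) := by
  intro v w h
  have key : ∀ i, i ≠ 𝔡 → v i = w i := fun i hi => by
    rw [← shearB_mulVec_ne 𝔡 l v hi, ← shearB_mulVec_ne 𝔡 l w hi, h]
  funext i
  rcases eq_or_ne i 𝔡 with rfl | hi
  · have h1 := congrFun h i
    rw [shearB_mulVec_d, shearB_mulVec_d] at h1
    have h2 : ∑ c ∈ Finset.univ.erase i, shearB d i l i c * v c
        = ∑ c ∈ Finset.univ.erase i, shearB d i l i c * w c :=
      Finset.sum_congr rfl fun c hc => by rw [key c (Finset.ne_of_mem_erase hc)]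
    linarith
  · exact key i hi

lemma shearM_mulVec_injective (𝔡 : Fin d) (j : ℕ) (l : Fin (d - 1) → ℤ) :
    Function.Injective ((shearAinv d 𝔡 j * shearB d 𝔡 l).mulVec) := by
  have hA : Function.Injective ((shearAinv d 𝔡 j).mulVec) := by
    intro a b hab
    funext i
    have h1 := congrFun hab i
    simp only [shearAinv, Matrix.mulVec_diagonal] at h1
    have hne : (if i = 𝔡 then (4 : ℝ) ^ (-(j : ℤ)) else (2 : ℝ) ^ (-(j : ℤ))) ≠ 0 := by
      split_ifs <;> positivity
    exact mul_left_cancel₀ hne h1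
  intro v w h
  rw [← Matrix.mulVec_mulVec, ← Matrix.mulVec_mulVec] at h
  exact shearB_mulVec_injective 𝔡 l (hA h)

lemma shearQ_k_unique {P P' : Index d} (hdir : P.dir = P'.dir) (hj : P.j = P'.j)
    (hlp : P.l = P'.l) {x : Fin d → ℝ} (h : x ∈ shearQ P) (h' : x ∈ shearQ P') :
    P.k = P'.k := by
  obtain ⟨y, hy, hxy⟩ := h
  obtain ⟨y', hy', hxy'⟩ := h'
  rw [hdir, hj, hlp] at hxy
  have hyy : y = y' := shearM_mulVec_injective _ _ _ (hxy.trans hxy'.symm)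
  subst hyy
  funext i
  have a1 := hy i
  have a2 := hy' i
  have b1 : (P.k i : ℝ) < (P'.k i : ℝ) + 1 := lt_of_le_of_lt a1.1 a2.2
  have b2 : (P'.k i : ℝ) < (P.k i : ℝ) + 1 := lt_of_le_of_lt a2.1 a1.2
  have c1 : P.k i < P'.k i + 1 := by exact_mod_cast b1
  have c2 : P'.k i < P.k i + 1 := by exact_mod_cast b2
  omega

lemma tsum_L_const_le (j : ℕ) (c : ℝ≥0∞) :
    ∑' _ : {l : Fin (d - 1) → ℤ // ∀ i, |l i| ≤ 2 ^ j}, c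
      ≤ (((2 ^ (j + 1) + 1) ^ (d - 1) : ℕ) : ℝ≥0∞) * c := by
  have hcast : ((2 ^ (j + 1) + 1 : ℕ) : ℤ) = 2 * (2 : ℤ) ^ j + 1 := by push_cast; ring
  set φ : {l : Fin (d - 1) → ℤ // ∀ i, |l i| ≤ 2 ^ j} → (Fin (d - 1) → Fin (2 ^ (j + 1) + 1)) :=
    fun l i => ⟨(l.1 i + 2 ^ j).toNat, by
      have hb := l.2 i
      rw [abs_le] at hb
      omega⟩ with hφdef
  have hφ : Function.Injective φ := by
    intro a b hab
    apply Subtype.ext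
    funext i
    have h1 : ((φ a i : ℕ)) = ((φ b i : ℕ)) := by rw [hab]
    simp only [hφdef] at h1
    have ha := a.2 i
    have hb := b.2 i
    rw [abs_le] at ha hb
    omega
  calc ∑' _ : {l : Fin (d - 1) → ℤ // ∀ i, |l i| ≤ 2 ^ j}, c
      = ∑' lsub, (fun _ : (Fin (d - 1) → Fin (2 ^ (j + 1) + 1)) => c) (φ lsub) := rfl
    _ ≤ ∑' _ : (Fin (d - 1) → Fin (2 ^ (j + 1) + 1)), c :=
        ENNReal.tsum_comp_le_tsum_of_injective hφ _
    _ = (((2 ^ (j + 1) + 1) ^ (d - 1) : ℕ) : ℝ≥0∞) * c := by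
        rw [tsum_fintype, Finset.sum_const, nsmul_eq_mul]
        congr 1
        simp [Finset.card_univ]

lemma tsum_ite_geo (r : ℝ≥0∞) (m : ℕ) :
    ∑' n : ℕ, (if m ≤ n then r ^ n else 0) ≤ r ^ m * (1 - r)⁻¹ := by
  have hinj : Function.Injective (fun n : ℕ => m + n) := fun a b hab => by
    simpa using hab
  have hsupp : Function.support (fun n : ℕ => if m ≤ n then r ^ n else 0)
      ⊆ Set.range (fun n : ℕ => m + n) := by
    intro n hn
    rcases le_or_gt m n with hle | hlt
    · exact ⟨n - m, by show m + (n - m) = n; omega⟩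
    · simp only [Function.mem_support, if_neg (not_le.2 hlt)] at hn
      exact absurd rfl hn
  rw [← hinj.tsum_eq hsupp]
  have heq : ∀ n : ℕ, (if m ≤ m + n then r ^ (m + n) else 0) = r ^ m * r ^ n := fun n => by
    rw [if_pos (Nat.le_add_right m n), pow_add]
  rw [tsum_congr heq, ENNReal.tsum_mul_left, ENNReal.tsum_geometric]

lemma ofReal_cubeVol_rpow (P : Index d) (t : ℝ) :
    ENNReal.ofReal (cubeVol P ^ t)
      = (2 : ℝ≥0∞) ^ ((-(P.j : ℝ) * ((d : ℝ) + 1)) * t) := by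
  rw [cubeVol, ← Real.rpow_intCast 2 (-(P.j : ℤ) * ((d : ℤ) + 1)),
    ← Real.rpow_mul (by norm_num : (0:ℝ) ≤ 2)]
  rw [show ((2:ℝ≥0∞)) = ENNReal.ofReal 2 by simp]
  rw [ENNReal.ofReal_rpow_of_pos (by norm_num : (0:ℝ) < 2)]
  congr 1
  push_cast
  ring

lemma j_mono {P Px : Index d} (h : cubeVol P ≤ cubeVol Px) : Px.j ≤ P.j := by
  rw [cubeVol, cubeVol, zpow_le_zpow_iff_right₀ (by norm_num : (1:ℝ) < 2)] at h
  by_contra hc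
  push_neg at hc
  have hlt : (P.j : ℤ) < (Px.j : ℤ) := by exact_mod_cast hc
  have hd : (0:ℤ) < (d : ℤ) + 1 := by positivity
  nlinarith

/-- Bounding summand. -/
noncomputable def hfun (d : ℕ) (γ : ℝ) (x : Fin d → ℝ) (m : ℕ) (P : Index d) : ℝ≥0∞ :=
  if x ∈ shearQ P ∧ m ≤ P.j then (2 : ℝ≥0∞) ^ ((-(P.j : ℝ) * ((d : ℝ) + 1)) * γ) else 0

/-- Per-scale bound. -/
noncomputable def cjfun (d : ℕ) (γ : ℝ) (m j : ℕ) : ℝ≥0∞ :=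
  if m ≤ j then (2 : ℝ≥0∞) ^ ((-(j : ℝ) * ((d : ℝ) + 1)) * γ) else 0

lemma claimA (γ : ℝ) (x : Fin d → ℝ) (m : ℕ) (𝔡 : Fin d) (j : ℕ)
    (ls : {l : Fin (d - 1) → ℤ // ∀ i, |l i| ≤ 2 ^ j}) :
    ∑' k : Fin d → ℤ, hfun d γ x m ⟨𝔡, j, ls.1, k, ls.2⟩ ≤ cjfun d γ m j := by
  by_cases hex : ∃ k : Fin d → ℤ, x ∈ shearQ (⟨𝔡, j, ls.1, k, ls.2⟩ : Index d)
  · obtain ⟨k0, hk0⟩ := hex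
    rw [tsum_eq_single k0]
    · unfold hfun cjfun
      split_ifs with h1 h2
      · exact le_rfl
      · exact absurd h1.2 h2
      · exact zero_le
      · exact le_rfl
    · intro k hk
      unfold hfun
      rw [if_neg]
      rintro ⟨hxk, -⟩
      exact hk (shearQ_k_unique (P := ⟨𝔡, j, ls.1, k, ls.2⟩)
        (P' := ⟨𝔡, j, ls.1, k0, ls.2⟩) rfl rfl rfl hxk hk0)
  · have hz : ∀ k : Fin d → ℤ, hfun d γ x m ⟨𝔡, j, ls.1, k, ls.2⟩ = 0 := by
      intro k
      unfold hfun
      rw [if_neg]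
      rintro ⟨hxk, -⟩
      exact hex ⟨k, hxk⟩
    calc ∑' k : Fin d → ℤ, hfun d γ x m ⟨𝔡, j, ls.1, k, ls.2⟩
        = ∑' _ : Fin d → ℤ, (0 : ℝ≥0∞) := tsum_congr hz
      _ = 0 := tsum_zero
      _ ≤ _ := zero_le

lemma claimC (hd : 2 ≤ d) (γ : ℝ) (m j : ℕ) :
    (((2 ^ (j + 1) + 1) ^ (d - 1) : ℕ) : ℝ≥0∞) * cjfun d γ m j
      ≤ (3 : ℝ≥0∞) ^ (d - 1) *
        (if m ≤ j then ((2 : ℝ≥0∞) ^ (((d : ℝ) - 1) - γ * ((d : ℝ) + 1))) ^ j else 0) := by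
  unfold cjfun
  split_ifs with hm
  · have h1 : ((2 ^ (j + 1) + 1) ^ (d - 1) : ℕ) ≤ ((3 * 2 ^ j) ^ (d - 1) : ℕ) := by
      apply Nat.pow_le_pow_left
      have h2j : 1 ≤ 2 ^ j := Nat.one_le_two_pow
      have : 2 ^ (j + 1) = 2 * 2 ^ j := by ring
      omega
    calc (((2 ^ (j + 1) + 1) ^ (d - 1) : ℕ) : ℝ≥0∞)
          * (2 : ℝ≥0∞) ^ ((-(j : ℝ) * ((d : ℝ) + 1)) * γ)
        ≤ (((3 * 2 ^ j) ^ (d - 1) : ℕ) : ℝ≥0∞)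
          * (2 : ℝ≥0∞) ^ ((-(j : ℝ) * ((d : ℝ) + 1)) * γ) := by
          exact mul_le_mul_left (by exact_mod_cast h1) _
      _ = (3 : ℝ≥0∞) ^ (d - 1) *
          ((2 : ℝ≥0∞) ^ (j * (d - 1)) * (2 : ℝ≥0∞) ^ ((-(j : ℝ) * ((d : ℝ) + 1)) * γ)) := by
          push_cast
          ring
      _ = (3 : ℝ≥0∞) ^ (d - 1) *
          ((2 : ℝ≥0∞) ^ (((d : ℝ) - 1) - γ * ((d : ℝ) + 1))) ^ j := by
          congr 1
          rw [← ENNReal.rpow_natCast 2 (j * (d - 1)),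
            ← ENNReal.rpow_add _ _ (by norm_num) (by norm_num),
            ← ENNReal.rpow_natCast ((2 : ℝ≥0∞) ^ (((d : ℝ) - 1) - γ * ((d : ℝ) + 1))) j,
            ← ENNReal.rpow_mul]
          congr 1
          push_cast [Nat.cast_sub (by omega : 1 ≤ d)]
          ring
  · simp

lemma cubeVol_rpow_pos (P : Index d) (t : ℝ) : 0 < cubeVol P ^ t := by
  have h0 : (0:ℝ) < cubeVol P := by
    rw [cubeVol]; positivity
  positivity

lemma final_eq (hd : 2 ≤ d) (γ : ℝ) (Px : Index d)
    (hγ : ((d : ℝ) - 1) / ((d : ℝ) + 1) < γ) :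
    (d : ℝ≥0∞) * ((3 : ℝ≥0∞) ^ (d - 1) *
        (((2 : ℝ≥0∞) ^ (((d : ℝ) - 1) - γ * ((d : ℝ) + 1))) ^ Px.j
          * ((1 : ℝ≥0∞) - (2 : ℝ≥0∞) ^ (((d : ℝ) - 1) - γ * ((d : ℝ) + 1)))⁻¹))
      = ENNReal.ofReal ((d : ℝ) * 3 ^ (d - 1)
            * (1 - (2 : ℝ) ^ (((d : ℝ) - 1) - γ * ((d : ℝ) + 1)))⁻¹
          * cubeVol Px ^ (γ - ((d : ℝ) - 1) / ((d : ℝ) + 1))) := by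
  have hdpos : (0:ℝ) < (d : ℝ) + 1 := by positivity
  have hAneg : ((d : ℝ) - 1) - γ * ((d : ℝ) + 1) < 0 := by
    have := (div_lt_iff₀ hdpos).mp hγ
    linarith
  have hra0 : (0:ℝ) < (2:ℝ) ^ (((d : ℝ) - 1) - γ * ((d : ℝ) + 1)) :=
    Real.rpow_pos_of_pos two_pos _
  have hra1 : (2:ℝ) ^ (((d : ℝ) - 1) - γ * ((d : ℝ) + 1)) < 1 :=
    Real.rpow_lt_one_of_one_lt_of_neg one_lt_two hAneg
  have e2 : (2:ℝ≥0∞) ^ (((d : ℝ) - 1) - γ * ((d : ℝ) + 1))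
      = ENNReal.ofReal ((2:ℝ) ^ (((d : ℝ) - 1) - γ * ((d : ℝ) + 1))) := by
    rw [show ((2:ℝ≥0∞)) = ENNReal.ofReal 2 by simp,
      ENNReal.ofReal_rpow_of_pos two_pos]
  have hinv : ((1:ℝ≥0∞) - (2:ℝ≥0∞) ^ (((d : ℝ) - 1) - γ * ((d : ℝ) + 1)))⁻¹
      = ENNReal.ofReal ((1 - (2:ℝ) ^ (((d : ℝ) - 1) - γ * ((d : ℝ) + 1)))⁻¹) := by
    rw [e2, ← ENNReal.ofReal_one, ← ENNReal.ofReal_sub 1 hra0.le,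
      ENNReal.ofReal_inv_of_pos (by linarith)]
  have hpow : ((2:ℝ≥0∞) ^ (((d : ℝ) - 1) - γ * ((d : ℝ) + 1))) ^ Px.j
      = ENNReal.ofReal (cubeVol Px ^ (γ - ((d : ℝ) - 1) / ((d : ℝ) + 1))) := by
    rw [ofReal_cubeVol_rpow,
      ← ENNReal.rpow_natCast ((2:ℝ≥0∞) ^ (((d : ℝ) - 1) - γ * ((d : ℝ) + 1))) Px.j,
      ← ENNReal.rpow_mul]
    congr 1
    field_simp
    ring
  rw [hpow, hinv]
  rw [show ((d:ℝ≥0∞)) = ENNReal.ofReal (d:ℝ) from (ENNReal.ofReal_natCast d).symm,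
    show ((3:ℝ≥0∞)) ^ (d-1) = ENNReal.ofReal ((3:ℝ) ^ (d-1)) by
      rw [ENNReal.ofReal_pow (by norm_num)]; norm_num]
  rw [← ENNReal.ofReal_mul (cubeVol_rpow_pos Px _).le,
    ← ENNReal.ofReal_mul (by positivity),
    ← ENNReal.ofReal_mul (by positivity)]
  congr 1
  ring

end ShearAux

/-- Lemma 3.1(a): if `γ > (d−1)/(d+1)` and `P^x` is a largest cube of `Γ` containing `x`, then
`|Q_{P^x}|^γ ≤ S^γ_Γ(x) ≤ C |Q_{P^x}|^{γ−(d−1)/(d+1)}` with `C = C(d,γ)`. -/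
theorem S_gamma_bounds_largest_cube (d : ℕ) (hd : 2 ≤ d) (γ : ℝ)
    (hγ : ((d : ℝ) - 1) / ((d : ℝ) + 1) < γ) :
    ∃ C : ℝ, 0 < C ∧ ∀ (Γ : Set (Shear.Index d)) (x : Fin d → ℝ) (Px : Shear.Index d),
      Px ∈ Γ → x ∈ Shear.shearQ Px →
      (∀ P ∈ Γ, x ∈ Shear.shearQ P → Shear.cubeVol P ≤ Shear.cubeVol Px) →
      ENNReal.ofReal (Shear.cubeVol Px ^ γ) ≤
          (∑' P : Γ, ENNReal.ofReal (Shear.cubeVol (P : Shear.Index d) ^ γ) *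
            (Shear.shearQ (P : Shear.Index d)).indicator (fun _ => (1 : ℝ≥0∞)) x) ∧
        (∑' P : Γ, ENNReal.ofReal (Shear.cubeVol (P : Shear.Index d) ^ γ) *
            (Shear.shearQ (P : Shear.Index d)).indicator (fun _ => (1 : ℝ≥0∞)) x) ≤
          ENNReal.ofReal (C * Shear.cubeVol Px ^ (γ - ((d : ℝ) - 1) / ((d : ℝ) + 1))) := by
  classical
  have hdpos : (0:ℝ) < (d : ℝ) + 1 := by positivity
  have hd0 : (0:ℝ) < (d : ℝ) := by exact_mod_cast (by omega : 0 < d)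
  have hAneg : ((d : ℝ) - 1) - γ * ((d : ℝ) + 1) < 0 := by
    have := (div_lt_iff₀ hdpos).mp hγ
    linarith
  have hra0 : (0:ℝ) < (2:ℝ) ^ (((d : ℝ) - 1) - γ * ((d : ℝ) + 1)) :=
    Real.rpow_pos_of_pos two_pos _
  have hra1 : (2:ℝ) ^ (((d : ℝ) - 1) - γ * ((d : ℝ) + 1)) < 1 :=
    Real.rpow_lt_one_of_one_lt_of_neg one_lt_two hAneg
  refine ⟨(d : ℝ) * 3 ^ (d - 1)
      * (1 - (2 : ℝ) ^ (((d : ℝ) - 1) - γ * ((d : ℝ) + 1)))⁻¹, ?_, ?_⟩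
  · apply mul_pos (mul_pos hd0 (by positivity))
    rw [inv_pos]
    linarith
  intro Γ x Px hPxΓ hx hmax
  constructor
  · calc ENNReal.ofReal (Shear.cubeVol Px ^ γ)
        = ENNReal.ofReal (Shear.cubeVol Px ^ γ) *
            (Shear.shearQ Px).indicator (fun _ => (1:ℝ≥0∞)) x := by
          rw [Set.indicator_of_mem hx, mul_one]
      _ ≤ _ := ENNReal.le_tsum (⟨Px, hPxΓ⟩ : Γ)
  · have step1 : ∀ P : Γ,
        ENNReal.ofReal (Shear.cubeVol (P : Shear.Index d) ^ γ) *
          (Shear.shearQ (P : Shear.Index d)).indicator (fun _ => (1:ℝ≥0∞)) x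
        ≤ hfun d γ x Px.j (P : Shear.Index d) := by
      intro P
      by_cases hxP : x ∈ Shear.shearQ (P : Shear.Index d)
      · rw [Set.indicator_of_mem hxP, mul_one, ofReal_cubeVol_rpow]
        unfold hfun
        rw [if_pos ⟨hxP, j_mono (hmax P.1 P.2 hxP)⟩]
      · rw [Set.indicator_of_notMem hxP, mul_zero]
        exact zero_le
    let E : (Σ _ : Fin d, Σ j : ℕ,
        {l : Fin (d - 1) → ℤ // ∀ i, |l i| ≤ 2 ^ j} × (Fin d → ℤ)) ≃ Shear.Index d :=
      { toFun := fun σ => ⟨σ.1, σ.2.1, σ.2.2.1.1, σ.2.2.2, σ.2.2.1.2⟩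
        invFun := fun P => ⟨P.dir, P.j, ⟨⟨P.l, P.hl⟩, P.k⟩⟩
        left_inv := fun σ => rfl
        right_inv := fun P => rfl }
    calc (∑' P : Γ, ENNReal.ofReal (Shear.cubeVol (P : Shear.Index d) ^ γ) *
            (Shear.shearQ (P : Shear.Index d)).indicator (fun _ => (1 : ℝ≥0∞)) x)
        ≤ ∑' P : Γ, hfun d γ x Px.j (P : Shear.Index d) := ENNReal.tsum_le_tsum step1
      _ ≤ ∑' P : Shear.Index d, hfun d γ x Px.j P :=
          ENNReal.tsum_comp_le_tsum_of_injective Subtype.val_injective _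
      _ = ∑' (𝔡 : Fin d) (j : ℕ) (ls : {l : Fin (d - 1) → ℤ // ∀ i, |l i| ≤ 2 ^ j})
            (k : Fin d → ℤ), hfun d γ x Px.j ⟨𝔡, j, ls.1, k, ls.2⟩ := by
          rw [← E.tsum_eq (hfun d γ x Px.j), ENNReal.tsum_sigma']
          refine tsum_congr fun 𝔡 => ?_
          rw [ENNReal.tsum_sigma']
          refine tsum_congr fun j => ?_
          rw [ENNReal.tsum_prod']
          rfl
      _ ≤ ∑' (𝔡 : Fin d) (j : ℕ),
            (((2 ^ (j + 1) + 1) ^ (d - 1) : ℕ) : ℝ≥0∞) * cjfun d γ Px.j j := by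
          refine ENNReal.tsum_le_tsum fun 𝔡 => ENNReal.tsum_le_tsum fun j => ?_
          calc ∑' (ls : {l : Fin (d - 1) → ℤ // ∀ i, |l i| ≤ 2 ^ j}) (k : Fin d → ℤ),
                hfun d γ x Px.j ⟨𝔡, j, ls.1, k, ls.2⟩
              ≤ ∑' _ : {l : Fin (d - 1) → ℤ // ∀ i, |l i| ≤ 2 ^ j}, cjfun d γ Px.j j :=
                ENNReal.tsum_le_tsum fun ls => claimA γ x Px.j 𝔡 j ls
            _ ≤ _ := tsum_L_const_le j _
      _ ≤ ∑' (_ : Fin d) (j : ℕ), (3 : ℝ≥0∞) ^ (d - 1) *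
            (if Px.j ≤ j then ((2 : ℝ≥0∞) ^ (((d : ℝ) - 1) - γ * ((d : ℝ) + 1))) ^ j else 0) :=
          ENNReal.tsum_le_tsum fun 𝔡 => ENNReal.tsum_le_tsum fun j => claimC hd γ Px.j j
      _ = (d : ℝ≥0∞) * ((3 : ℝ≥0∞) ^ (d - 1) * ∑' j : ℕ,
            (if Px.j ≤ j then ((2 : ℝ≥0∞) ^ (((d : ℝ) - 1) - γ * ((d : ℝ) + 1))) ^ j else 0)) := by
          rw [tsum_fintype]
          simp only [ENNReal.tsum_mul_left]
          rw [Finset.sum_const, nsmul_eq_mul]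
          simp [Finset.card_univ]
      _ ≤ (d : ℝ≥0∞) * ((3 : ℝ≥0∞) ^ (d - 1) *
            (((2 : ℝ≥0∞) ^ (((d : ℝ) - 1) - γ * ((d : ℝ) + 1))) ^ Px.j
              * ((1 : ℝ≥0∞) - (2 : ℝ≥0∞) ^ (((d : ℝ) - 1) - γ * ((d : ℝ) + 1)))⁻¹)) := by
          gcongr
          exact tsum_ite_geo _ _
      _ = ENNReal.ofReal ((d : ℝ) * 3 ^ (d - 1)
            * (1 - (2 : ℝ) ^ (((d : ℝ) - 1) - γ * ((d : ℝ) + 1)))⁻¹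
            * Shear.cubeVol Px ^ (γ - ((d : ℝ) - 1) / ((d : ℝ) + 1))) := final_eq hd γ Px hγ
end

section
/- Let d ≥ 2 and γ < (d−1)/(d+1). Let Γ ⊂ 𝒬_AB and define S^γ_Γ(x) = Σ_{P∈Γ} |Q_P|^γ χ_{Q_P}(x). Let x ∈ ℝ^d be such that the set { |Q_P| : P ∈ Γ, x ∈ Q_P } is nonempty and attains its minimum at some P_x ∈ Γ (i.e. x ∈ Q_{P_x} and |Q_P| ≥ |Q_{P_x}| for every P ∈ Γ with x ∈ Q_P). Then |Q_{P_x}|^γ ≤ S^γ_Γ(x) ≤ C |Q_{P_x}|^{γ − (d−1)/(d+1)}, where C > 0 depends only on d and γ. -/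
open scoped ENNReal NNReal
open MeasureTheory

section Helpers
open Shear

lemma shearB_row_ne (d : ℕ) (𝔡 : Fin d) (l : Fin (d-1) → ℤ) (i : Fin d) (hi : i ≠ 𝔡)
    (v : Fin d → ℝ) : (shearB d 𝔡 l).mulVec v i = v i := by
  have hB : ∀ c, shearB d 𝔡 l i c = if i = c then 1 else 0 := by
    intro c; by_cases h : i = c <;> simp [shearB, h, hi]
  simp only [Matrix.mulVec, dotProduct, hB]
  simp [ite_mul]

lemma shearB_row_eq (d : ℕ) (𝔡 : Fin d) (l : Fin (d-1) → ℤ) (v : Fin d → ℝ) :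
    (shearB d 𝔡 l).mulVec v 𝔡 = v 𝔡 + ∑ c ∈ Finset.univ.erase 𝔡, shearB d 𝔡 l 𝔡 c * v c := by
  simp only [Matrix.mulVec, dotProduct]
  rw [← Finset.add_sum_erase _ _ (Finset.mem_univ 𝔡)]
  simp [shearB]

lemma shearB_mulVec_inj (d : ℕ) (𝔡 : Fin d) (l : Fin (d-1) → ℤ) :
    Function.Injective ((shearB d 𝔡 l).mulVec) := by
  intro y y' h
  have hne : ∀ i, i ≠ 𝔡 → y i = y' i := by
    intro i hi
    rw [← shearB_row_ne d 𝔡 l i hi y, ← shearB_row_ne d 𝔡 l i hi y', h]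
  funext i
  by_cases hi : i = 𝔡
  · subst hi
    have h𝔡 := congrFun h i
    rw [shearB_row_eq, shearB_row_eq] at h𝔡
    have : ∑ c ∈ Finset.univ.erase i, shearB d i l i c * y c
        = ∑ c ∈ Finset.univ.erase i, shearB d i l i c * y' c := by
      refine Finset.sum_congr rfl fun c hc => ?_
      rw [hne c (Finset.ne_of_mem_erase hc)]
    linarith [h𝔡, this]
  · exact hne i hi

lemma shearM_inj (d : ℕ) (𝔡 : Fin d) (j : ℕ) (l : Fin (d-1) → ℤ) :
    Function.Injective ((shearAinv d 𝔡 j * shearB d 𝔡 l).mulVec) := by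
  intro y y' h
  rw [← Matrix.mulVec_mulVec, ← Matrix.mulVec_mulVec] at h
  refine shearB_mulVec_inj d 𝔡 l ?_
  funext i
  have hi := congrFun h i
  simp only [shearAinv, Matrix.mulVec_diagonal] at hi
  have hpos : (0:ℝ) < if i = 𝔡 then (4 : ℝ) ^ (-(j : ℤ)) else (2 : ℝ) ^ (-(j : ℤ)) := by
    split <;> positivity
  exact mul_left_cancel₀ (ne_of_gt hpos) hi

lemma shearQ_k_unique_s6 {d : ℕ} {𝔡 : Fin d} {j : ℕ} {l : Fin (d-1) → ℤ}
    {hl : ∀ i, |l i| ≤ 2 ^ j} {k k' : Fin d → ℤ} {x : Fin d → ℝ}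
    (h : x ∈ shearQ ⟨𝔡, j, l, k, hl⟩) (h' : x ∈ shearQ ⟨𝔡, j, l, k', hl⟩) : k = k' := by
  obtain ⟨y, hy, hxy⟩ := h
  obtain ⟨y', hy', hxy'⟩ := h'
  have : y = y' := shearM_inj d 𝔡 j (fun i => -l i) (hxy.trans hxy'.symm)
  subst this
  funext i
  have h1 : (k i : ℝ) < (k' i : ℝ) + 1 := lt_of_le_of_lt (hy i).1 (hy' i).2
  have h2 : (k' i : ℝ) < (k i : ℝ) + 1 := lt_of_le_of_lt (hy' i).1 (hy i).2
  have h1' : k i < k' i + 1 := by exact_mod_cast h1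
  have h2' : k' i < k i + 1 := by exact_mod_cast h2
  omega

lemma j_le_of_cubeVol_le {d : ℕ} {P P' : Index d}
    (h : cubeVol P ≤ cubeVol P') : P'.j ≤ P.j := by
  unfold cubeVol at h
  rw [zpow_le_zpow_iff_right₀ (by norm_num : (1:ℝ) < 2)] at h
  have hd1 : 0 < (d:ℤ) + 1 := by positivity
  nlinarith [h, hd1]

/-- Equivalence splitting the index structure into a sigma type. -/
def idxEquiv (d : ℕ) : Index d ≃
    Σ (_ : Fin d) (j : ℕ) (_ : {l : Fin (d - 1) → ℤ // ∀ i, |l i| ≤ 2 ^ j}), (Fin d → ℤ) where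
  toFun P := ⟨P.dir, P.j, ⟨P.l, P.hl⟩, P.k⟩
  invFun q := ⟨q.1, q.2.1, q.2.2.1.1, q.2.2.2, q.2.2.1.2⟩
  left_inv _ := rfl
  right_inv _ := rfl

lemma real_geom_bound (d : ℕ) (hd : 2 ≤ d) (γ : ℝ)
    (hγ : γ < ((d : ℝ) - 1) / ((d : ℝ) + 1)) :
    ∃ C : ℝ, 0 < C ∧ ∀ J : ℕ,
      (d : ℝ) * ∑ j ∈ Finset.range (J + 1),
          ((2 * 2 ^ j + 1 : ℕ) : ℝ) ^ (d - 1) * ((2:ℝ) ^ (-(j:ℤ) * (d + 1))) ^ γ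
        ≤ C * ((2:ℝ) ^ (-(J:ℤ) * (d + 1))) ^ (γ - ((d : ℝ) - 1) / ((d : ℝ) + 1)) := by
  set ρ : ℝ := ((d : ℝ) - 1) / ((d : ℝ) + 1) with hρ
  have hd1 : (0:ℝ) < (d:ℝ) + 1 := by positivity
  have hρd : ρ * ((d:ℝ) + 1) = (d:ℝ) - 1 := by rw [hρ]; exact div_mul_cancel₀ _ (ne_of_gt hd1)
  set e : ℝ := ((d:ℝ) - 1) - ((d:ℝ) + 1) * γ with he
  have he0 : 0 < e := by
    have : ((d:ℝ)+1) * γ < ((d:ℝ)+1) * ρ := mul_lt_mul_of_pos_left hγ hd1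
    have h2 : ((d:ℝ)+1) * ρ = (d:ℝ) - 1 := by rw [mul_comm]; exact hρd
    linarith
  set r : ℝ := (2:ℝ) ^ e with hr
  have hr1 : 1 < r := Real.one_lt_rpow_iff_of_pos (by norm_num) |>.2 (Or.inl ⟨by norm_num, he0⟩)
  have hr0 : 0 < r := lt_trans one_pos hr1
  have hC : (0:ℝ) < (d:ℝ) * 3 ^ (d-1) * (r / (r - 1)) := by
    have h1 : (0:ℝ) < r - 1 := by linarith
    have h2 : (0:ℝ) < (d:ℝ) := by exact_mod_cast (by omega : 0 < d)
    exact mul_pos (mul_pos h2 (by positivity)) (div_pos hr0 h1)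
  refine ⟨(d:ℝ) * 3 ^ (d-1) * (r / (r - 1)), hC, fun J => ?_⟩
  have hRHS : ((2:ℝ) ^ (-(J:ℤ) * (d + 1))) ^ (γ - ρ) = r ^ J := by
    rw [← Real.rpow_intCast 2 (-(J:ℤ) * (d + 1)), ← Real.rpow_natCast r J, hr,
      ← Real.rpow_mul (by norm_num), ← Real.rpow_mul (by norm_num)]
    congr 1
    push_cast
    nlinarith [hρd]
  rw [hRHS]
  have hterm : ∀ j : ℕ,
      ((2 * 2 ^ j + 1 : ℕ) : ℝ) ^ (d - 1) * ((2:ℝ) ^ (-(j:ℤ) * (d + 1))) ^ γ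
        ≤ 3 ^ (d-1) * r ^ j := by
    intro j
    have hA : ((2 * 2 ^ j + 1 : ℕ) : ℝ) ^ (d - 1) ≤ ((3:ℝ) * 2 ^ j) ^ (d - 1) := by
      apply pow_le_pow_left₀ (by positivity)
      push_cast
      have : (1:ℝ) ≤ 2 ^ j := one_le_pow₀ (by norm_num)
      linarith
    have hposγ : (0:ℝ) < ((2:ℝ) ^ (-(j:ℤ) * (d + 1))) ^ γ := by
      apply Real.rpow_pos_of_pos; positivity
    calc ((2 * 2 ^ j + 1 : ℕ) : ℝ) ^ (d - 1) * ((2:ℝ) ^ (-(j:ℤ) * (d + 1))) ^ γ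
        ≤ ((3:ℝ) * 2 ^ j) ^ (d - 1) * ((2:ℝ) ^ (-(j:ℤ) * (d + 1))) ^ γ :=
          mul_le_mul_of_nonneg_right hA hposγ.le
      _ = 3 ^ (d-1) * r ^ j := by
          rw [mul_pow, mul_assoc]
          congr 1
          rw [← pow_mul, ← Real.rpow_natCast 2 (j * (d-1)),
            ← Real.rpow_intCast 2 (-(j:ℤ) * (d + 1)), ← Real.rpow_mul (by norm_num),
            ← Real.rpow_natCast r j, hr, ← Real.rpow_mul (by norm_num),
            ← Real.rpow_add (by norm_num : (0:ℝ) < 2)]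
          congr 1
          have hcast : ((j * (d-1) : ℕ) : ℝ) = (j:ℝ) * ((d:ℝ) - 1) := by
            push_cast [Nat.cast_sub (by omega : 1 ≤ d)]; ring
          rw [hcast]
          push_cast
          ring
  calc (d : ℝ) * ∑ j ∈ Finset.range (J + 1),
          ((2 * 2 ^ j + 1 : ℕ) : ℝ) ^ (d - 1) * ((2:ℝ) ^ (-(j:ℤ) * (d + 1))) ^ γ
      ≤ (d : ℝ) * ∑ j ∈ Finset.range (J + 1), 3 ^ (d-1) * r ^ j := by
        apply mul_le_mul_of_nonneg_left _ (by positivity)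
        exact Finset.sum_le_sum fun j _ => hterm j
    _ = (d : ℝ) * 3 ^ (d-1) * ∑ j ∈ Finset.range (J + 1), r ^ j := by
        rw [← Finset.mul_sum]; ring
    _ ≤ (d : ℝ) * 3 ^ (d-1) * (r / (r - 1)) * r ^ J := by
        rw [geom_sum_eq (ne_of_gt hr1)]
        rw [mul_assoc ((d:ℝ) * 3 ^ (d-1))]
        apply mul_le_mul_of_nonneg_left _ (by positivity)
        rw [div_mul_eq_mul_div, div_le_div_iff₀ (by linarith) (by linarith)]
        have : r ^ (J + 1) = r * r ^ J := by ring
        nlinarith [pow_pos hr0 J]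

lemma tsum_shear_const_le (m j : ℕ) (c : ℝ≥0∞) :
    ∑' (_ : {l : Fin m → ℤ // ∀ i, |l i| ≤ 2 ^ j}), c
      ≤ ((2 * 2 ^ j + 1) ^ m : ℕ) * c := by
  set g : (Fin m → ℤ) → ℝ≥0∞ := fun l => if ∀ i, |l i| ≤ 2 ^ j then c else 0 with hg
  have step1 : ∑' (_ : {l : Fin m → ℤ // ∀ i, |l i| ≤ 2 ^ j}), c ≤ ∑' l, g l := by
    refine Summable.tsum_le_tsum_of_inj Subtype.val Subtype.val_injective
      (fun _ _ => zero_le) (fun b => ?_) ENNReal.summable ENNReal.summable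
    simp only [hg, if_pos b.2, le_refl]
  refine step1.trans ?_
  set s : Finset (Fin m → ℤ) := Fintype.piFinset fun _ => Finset.Icc (-(2^j : ℤ)) (2^j)
  have hvanish : ∀ l ∉ s, g l = 0 := by
    intro l hl
    simp only [s, Fintype.mem_piFinset, not_forall] at hl
    obtain ⟨i, hi⟩ := hl
    rw [Finset.mem_Icc, ← abs_le] at hi
    simp only [hg]
    exact if_neg fun h => hi (h i)
  rw [tsum_eq_sum hvanish]
  have hcard : s.card = (2 * 2 ^ j + 1) ^ m := by
    simp only [s, Fintype.card_piFinset]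
    rw [Finset.prod_const]
    congr 1
    · rw [Int.card_Icc]
      have hn : ((2:ℤ))^j = ((2^j : ℕ) : ℤ) := by push_cast; ring
      rw [hn]
      omega
    · simp
  calc ∑ l ∈ s, g l ≤ s.card • c := Finset.sum_le_card_nsmul s g c fun l _ => by
        simp only [hg]; split <;> simp
    _ = ((2 * 2 ^ j + 1) ^ m : ℕ) * c := by rw [hcard, nsmul_eq_mul]

end Helpers

/-- Lemma 3.1(b): if `γ < (d−1)/(d+1)` and `P_x` is a smallest cube of `Γ` containing `x`, then
`|Q_{P_x}|^γ ≤ S^γ_Γ(x) ≤ C |Q_{P_x}|^{γ−(d−1)/(d+1)}` with `C = C(d,γ)`. -/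
theorem S_gamma_bounds_smallest_cube (d : ℕ) (hd : 2 ≤ d) (γ : ℝ)
    (hγ : γ < ((d : ℝ) - 1) / ((d : ℝ) + 1)) :
    ∃ C : ℝ, 0 < C ∧ ∀ (Γ : Set (Shear.Index d)) (x : Fin d → ℝ) (Px : Shear.Index d),
      Px ∈ Γ → x ∈ Shear.shearQ Px →
      (∀ P ∈ Γ, x ∈ Shear.shearQ P → Shear.cubeVol Px ≤ Shear.cubeVol P) →
      ENNReal.ofReal (Shear.cubeVol Px ^ γ) ≤
          (∑' P : Γ, ENNReal.ofReal (Shear.cubeVol (P : Shear.Index d) ^ γ) *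
            (Shear.shearQ (P : Shear.Index d)).indicator (fun _ => (1 : ℝ≥0∞)) x) ∧
        (∑' P : Γ, ENNReal.ofReal (Shear.cubeVol (P : Shear.Index d) ^ γ) *
            (Shear.shearQ (P : Shear.Index d)).indicator (fun _ => (1 : ℝ≥0∞)) x) ≤
          ENNReal.ofReal (C * Shear.cubeVol Px ^ (γ - ((d : ℝ) - 1) / ((d : ℝ) + 1))) := by
  classical
  obtain ⟨C, hC, hbound⟩ := real_geom_bound d hd γ hγ
  refine ⟨C, hC, fun Γ x Px hPxΓ hx hmin => ?_⟩
  constructor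
  · -- lower bound
    have h := ENNReal.le_tsum (f := fun P : Γ =>
      ENNReal.ofReal (Shear.cubeVol (P : Shear.Index d) ^ γ) *
        (Shear.shearQ (P : Shear.Index d)).indicator (fun _ => (1 : ℝ≥0∞)) x) ⟨Px, hPxΓ⟩
    simpa [Set.indicator_of_mem hx] using h
  · -- upper bound
    set J := Px.j with hJ
    set c : ℕ → ℝ≥0∞ := fun j => ENNReal.ofReal (((2:ℝ) ^ (-(j:ℤ) * (d + 1))) ^ γ) with hc
    set h : Shear.Index d → ℝ≥0∞ := fun P =>
      if x ∈ Shear.shearQ P ∧ P.j ≤ J then ENNReal.ofReal (Shear.cubeVol P ^ γ) else 0 with hh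
    have step1 : (∑' P : Γ, ENNReal.ofReal (Shear.cubeVol (P : Shear.Index d) ^ γ) *
        (Shear.shearQ (P : Shear.Index d)).indicator (fun _ => (1 : ℝ≥0∞)) x)
        ≤ ∑' P : Shear.Index d, h P := by
      refine Summable.tsum_le_tsum_of_inj Subtype.val Subtype.val_injective
        (fun _ _ => zero_le) (fun P => ?_) ENNReal.summable ENNReal.summable
      by_cases hxP : x ∈ Shear.shearQ (P : Shear.Index d)
      · have hj : (P : Shear.Index d).j ≤ J := j_le_of_cubeVol_le (hmin P.1 P.2 hxP)
        simp [hh, Set.indicator_of_mem hxP, hxP, hj]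
      · simp [Set.indicator_of_notMem hxP]
    have step2 : ∑' P : Shear.Index d, h P =
        ∑' (𝔡 : Fin d) (j : ℕ) (l : {l : Fin (d - 1) → ℤ // ∀ i, |l i| ≤ 2 ^ j})
          (k : Fin d → ℤ), h ⟨𝔡, j, l.1, k, l.2⟩ := by
      rw [← Equiv.tsum_eq (idxEquiv d).symm h, ENNReal.tsum_sigma']
      refine tsum_congr fun 𝔡 => ?_
      rw [ENNReal.tsum_sigma']
      refine tsum_congr fun j => ?_
      rw [ENNReal.tsum_sigma']
      rfl
    have step3 : ∀ (𝔡 : Fin d) (j : ℕ) (l : {l : Fin (d - 1) → ℤ // ∀ i, |l i| ≤ 2 ^ j}),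
        (∑' k : Fin d → ℤ, h ⟨𝔡, j, l.1, k, l.2⟩) ≤ if j ≤ J then c j else 0 := by
      intro 𝔡 j l
      by_cases hjJ : j ≤ J
      · rw [if_pos hjJ]
        by_cases hex : ∃ k, x ∈ Shear.shearQ ⟨𝔡, j, l.1, k, l.2⟩
        · obtain ⟨k0, hk0⟩ := hex
          rw [tsum_eq_single k0 ?_]
          · simp only [hh]
            split
            · exact le_of_eq rfl
            · exact zero_le
          · intro k hk
            simp only [hh]
            refine if_neg ?_
            rintro ⟨hxk, -⟩
            exact hk (shearQ_k_unique_s6 hxk hk0)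
        · have hz : ∀ k : Fin d → ℤ, h ⟨𝔡, j, l.1, k, l.2⟩ = 0 := fun k => by
            simp only [hh]
            exact if_neg fun hcon => hex ⟨k, hcon.1⟩
          simp [hz]
      · rw [if_neg hjJ]
        have hz : ∀ k : Fin d → ℤ, h ⟨𝔡, j, l.1, k, l.2⟩ = 0 := fun k => by
          simp only [hh]
          exact if_neg fun hcon => hjJ hcon.2
        simp [hz]
    have step4 : ∀ (𝔡 : Fin d),
        (∑' (j : ℕ) (l : {l : Fin (d - 1) → ℤ // ∀ i, |l i| ≤ 2 ^ j})
            (k : Fin d → ℤ), h ⟨𝔡, j, l.1, k, l.2⟩)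
          ≤ ∑' j : ℕ, (if j ≤ J then (((2 * 2 ^ j + 1) ^ (d-1) : ℕ) : ℝ≥0∞) * c j else 0) := by
      intro 𝔡
      refine ENNReal.tsum_le_tsum fun j => ?_
      by_cases hjJ : j ≤ J
      · simp only [if_pos hjJ]
        calc (∑' (l : {l : Fin (d - 1) → ℤ // ∀ i, |l i| ≤ 2 ^ j})
              (k : Fin d → ℤ), h ⟨𝔡, j, l.1, k, l.2⟩)
            ≤ ∑' (_ : {l : Fin (d - 1) → ℤ // ∀ i, |l i| ≤ 2 ^ j}), c j := by
              refine ENNReal.tsum_le_tsum fun l => ?_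
              have := step3 𝔡 j l
              rwa [if_pos hjJ] at this
          _ ≤ (((2 * 2 ^ j + 1) ^ (d-1) : ℕ) : ℝ≥0∞) * c j := tsum_shear_const_le (d-1) j (c j)
      · simp only [if_neg hjJ]
        have : ∀ l : {l : Fin (d - 1) → ℤ // ∀ i, |l i| ≤ 2 ^ j},
            (∑' k : Fin d → ℤ, h ⟨𝔡, j, l.1, k, l.2⟩) = 0 := fun l =>
          le_antisymm (by have := step3 𝔡 j l; rwa [if_neg hjJ] at this) (zero_le)
        simp [this]
    have step5 : (∑' j : ℕ, (if j ≤ J then (((2 * 2 ^ j + 1) ^ (d-1) : ℕ) : ℝ≥0∞) * c j else 0))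
        = ∑ j ∈ Finset.range (J + 1), (((2 * 2 ^ j + 1) ^ (d-1) : ℕ) : ℝ≥0∞) * c j := by
      rw [tsum_eq_sum (s := Finset.range (J + 1))
        (fun j hj => if_neg (fun hle : j ≤ J => hj (Finset.mem_range.2 (Nat.lt_succ_of_le hle))))]
      refine Finset.sum_congr rfl fun j hj => ?_
      rw [if_pos (by have := Finset.mem_range.1 hj; omega)]
    have step6 : (∑ j ∈ Finset.range (J + 1), (((2 * 2 ^ j + 1) ^ (d-1) : ℕ) : ℝ≥0∞) * c j)
        = ENNReal.ofReal (∑ j ∈ Finset.range (J + 1),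
            ((2 * 2 ^ j + 1 : ℕ) : ℝ) ^ (d - 1) * ((2:ℝ) ^ (-(j:ℤ) * (d + 1))) ^ γ) := by
      rw [ENNReal.ofReal_sum_of_nonneg (fun j _ => by positivity)]
      refine Finset.sum_congr rfl fun j _ => ?_
      rw [hc, ← ENNReal.ofReal_natCast, ← ENNReal.ofReal_mul (by positivity)]
      congr 1
      push_cast
      ring
    calc (∑' P : Γ, ENNReal.ofReal (Shear.cubeVol (P : Shear.Index d) ^ γ) *
          (Shear.shearQ (P : Shear.Index d)).indicator (fun _ => (1 : ℝ≥0∞)) x)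
        ≤ ∑' P : Shear.Index d, h P := step1
      _ = ∑' (𝔡 : Fin d) (j : ℕ) (l : {l : Fin (d - 1) → ℤ // ∀ i, |l i| ≤ 2 ^ j})
            (k : Fin d → ℤ), h ⟨𝔡, j, l.1, k, l.2⟩ := step2
      _ ≤ ∑' (_ : Fin d), ∑' j : ℕ,
            (if j ≤ J then (((2 * 2 ^ j + 1) ^ (d-1) : ℕ) : ℝ≥0∞) * c j else 0) :=
          ENNReal.tsum_le_tsum step4
      _ = (d : ℝ≥0∞) * ∑ j ∈ Finset.range (J + 1),
            (((2 * 2 ^ j + 1) ^ (d-1) : ℕ) : ℝ≥0∞) * c j := by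
          rw [tsum_fintype, step5, Finset.sum_const, Finset.card_univ, Fintype.card_fin,
            nsmul_eq_mul]
      _ = ENNReal.ofReal ((d : ℝ) * ∑ j ∈ Finset.range (J + 1),
            ((2 * 2 ^ j + 1 : ℕ) : ℝ) ^ (d - 1) * ((2:ℝ) ^ (-(j:ℤ) * (d + 1))) ^ γ) := by
          rw [step6, ← ENNReal.ofReal_natCast d, ← ENNReal.ofReal_mul (by positivity)]
      _ ≤ ENNReal.ofReal (C * Shear.cubeVol Px ^ (γ - ((d : ℝ) - 1) / ((d : ℝ) + 1))) :=
          ENNReal.ofReal_le_ofReal (hbound J)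
end

section
/- Let d ≥ 2, s₁, s₂ ∈ ℝ, 0 < p₁, p₂ < ∞ and α ∈ ℝ. Then the equality ‖ Σ_{P∈Γ} |Q_P|^{s₂ − 1/p₂ + 1/2} e_P ‖_{b^{s₁,p₁}_{p₁}(AB)} = ( ν_α(Γ) )^{1/p₁} holds for all Γ ⊂ 𝒬_AB with ν_α(Γ) < ∞ if and only if α = p₁(s₂ − 1/p₂ − s₁ + 1/p₁). -/
open scoped ENNReal NNReal
open MeasureTheory

namespace ShearAux

/-- Equiv between the iterated index type and `Shear.Index d`. -/
def idxEquiv (d : ℕ) :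
    (Σ 𝔡 : Fin d, Σ j : ℕ,
      {l : Fin (d - 1) → ℤ // ∀ i, |l i| ≤ 2 ^ j} × (Fin d → ℤ)) ≃ Shear.Index d where
  toFun x := ⟨x.1, x.2.1, x.2.2.1.1, x.2.2.2, x.2.2.1.2⟩
  invFun P := ⟨P.dir, P.j, ⟨⟨P.l, P.hl⟩, P.k⟩⟩
  left_inv x := rfl
  right_inv P := rfl

lemma tsum_index {d : ℕ} (f : Shear.Index d → ℝ≥0∞) :
    ∑' (𝔡 : Fin d) (j : ℕ) (l : {l : Fin (d - 1) → ℤ // ∀ i, |l i| ≤ 2 ^ j}) (k : Fin d → ℤ),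
      f ⟨𝔡, j, l.1, k, l.2⟩ = ∑' P, f P := by
  rw [← (idxEquiv d).tsum_eq f, ENNReal.tsum_sigma']
  refine tsum_congr fun 𝔡 => ?_
  rw [ENNReal.tsum_sigma']
  refine tsum_congr fun j => ?_
  rw [ENNReal.tsum_prod']
  rfl

set_option maxHeartbeats 1000000 in
lemma besov_eq {d : ℕ} (s₁ s₂ p₁ p₂ : ℝ) (hp₁ : 0 < p₁) (Γ : Set (Shear.Index d)) :
    Shear.besovNorm s₁ p₁ p₁
        (Set.indicator Γ fun P => ((Shear.cubeVol P ^ (s₂ - 1 / p₂ + 1 / 2) : ℝ) : ℂ)) =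
      Shear.nu (p₁ * (s₂ - 1 / p₂ - s₁ + 1 / p₁)) Γ ^ (1 / p₁) := by
  have hpt : ∀ P : Shear.Index d,
      (ENNReal.ofReal (((2 : ℝ) ^ (-(P.j : ℤ) * (d + 1))) ^ (-s₁ + 1 / p₁ - 1 / 2)) *
          (‖Set.indicator Γ
              (fun P => ((Shear.cubeVol P ^ (s₂ - 1 / p₂ + 1 / 2) : ℝ) : ℂ)) P‖₊ : ℝ≥0∞)) ^ p₁
        = Γ.indicator (fun P => ENNReal.ofReal
            (Shear.cubeVol P ^ (p₁ * (s₂ - 1 / p₂ - s₁ + 1 / p₁)))) P := by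
    intro P
    have hv : (0 : ℝ) < (2 : ℝ) ^ (-(P.j : ℤ) * (d + 1)) := zpow_pos (by norm_num) _
    by_cases hP : P ∈ Γ
    · simp only [Set.indicator_of_mem hP]
      rw [Complex.nnnorm_real]
      unfold Shear.cubeVol
      rw [← enorm_eq_nnnorm, Real.enorm_eq_ofReal (Real.rpow_nonneg hv.le _),
        ← ENNReal.ofReal_mul (Real.rpow_nonneg hv.le _), ← Real.rpow_add hv,
        ENNReal.ofReal_rpow_of_pos (Real.rpow_pos_of_pos hv _), ← Real.rpow_mul hv.le]
      congr 1
      ring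
    · simp only [Set.indicator_of_notMem hP]
      simp [ENNReal.zero_rpow_of_pos hp₁]
  unfold Shear.besovNorm Shear.nu
  rw [tsum_subtype Γ fun P => ENNReal.ofReal
      (Shear.cubeVol P ^ (p₁ * (s₂ - 1 / p₂ - s₁ + 1 / p₁)))]
  rw [div_self hp₁.ne']
  simp only [ENNReal.rpow_one]
  congr 1
  rw [← tsum_index (f := Γ.indicator fun P => ENNReal.ofReal
      (Shear.cubeVol P ^ (p₁ * (s₂ - 1 / p₂ - s₁ + 1 / p₁))))]
  exact tsum_congr fun 𝔡 => tsum_congr fun j => tsum_congr fun l => tsum_congr fun k => hpt ⟨𝔡, j, l.1, k, l.2⟩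

lemma exp_eq {d : ℕ} (P : Shear.Index d) (hj : P.j ≠ 0) {a b : ℝ}
    (h : ENNReal.ofReal (Shear.cubeVol P ^ a) = ENNReal.ofReal (Shear.cubeVol P ^ b)) :
    a = b := by
  have hv : (0 : ℝ) < Shear.cubeVol P := by unfold Shear.cubeVol; positivity
  have h4 : Shear.cubeVol P ^ a = Shear.cubeVol P ^ b :=
    (ENNReal.ofReal_eq_ofReal_iff (Real.rpow_nonneg hv.le _) (Real.rpow_nonneg hv.le _)).mp h
  have h5 := congrArg Real.log h4
  rw [Real.log_rpow hv, Real.log_rpow hv] at h5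
  have hlog : Real.log (Shear.cubeVol P) ≠ 0 := by
    unfold Shear.cubeVol
    rw [Real.log_zpow]
    refine mul_ne_zero ?_ (Real.log_pos (by norm_num)).ne'
    rw [Int.cast_ne_zero]
    have hj' : ((P.j : ℤ)) ≠ 0 := Int.natCast_ne_zero.mpr hj
    have hd : ((d : ℤ) + 1) ≠ 0 := by positivity
    exact mul_ne_zero (neg_ne_zero.mpr hj') hd
  exact mul_right_cancel₀ hlog h5

end ShearAux

/-- Theorem 3.4: the Temlyakov property
`‖Σ_{P∈Γ} e_P/‖e_P‖_{b^{s₂,q₂}_{p₂}}‖_{b^{s₁,p₁}_{p₁}(AB)} = ν_α(Γ)^{1/p₁}` holds for all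
`Γ` with `ν_α(Γ) < ∞` if and only if `α = p₁(s₂ − 1/p₂ − s₁ + 1/p₁)`. -/
theorem besov_democracy_iff (d : ℕ) (hd : 2 ≤ d) (s₁ s₂ p₁ p₂ : ℝ)
    (hp₁ : 0 < p₁) (hp₂ : 0 < p₂) (α : ℝ) :
    (∀ Γ : Set (Shear.Index d), Shear.nu α Γ < ∞ →
        Shear.besovNorm s₁ p₁ p₁
            (Set.indicator Γ fun P => ((Shear.cubeVol P ^ (s₂ - 1 / p₂ + 1 / 2) : ℝ) : ℂ)) =
          Shear.nu α Γ ^ (1 / p₁)) ↔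
      α = p₁ * (s₂ - 1 / p₂ - s₁ + 1 / p₁) := by
  constructor
  · intro h
    set P₀ : Shear.Index d := ⟨⟨0, by omega⟩, 1, fun _ => 0, fun _ => 0, fun i => by simp⟩
      with hP₀
    have hfin : Shear.nu α ({P₀} : Set (Shear.Index d)) < ∞ := by
      unfold Shear.nu
      rw [tsum_singleton P₀ fun P => ENNReal.ofReal (Shear.cubeVol P ^ α)]
      exact ENNReal.ofReal_lt_top
    have h1 := h {P₀} hfin
    rw [ShearAux.besov_eq s₁ s₂ p₁ p₂ hp₁ ({P₀} : Set (Shear.Index d))] at h1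
    have h3 : Shear.nu (p₁ * (s₂ - 1 / p₂ - s₁ + 1 / p₁)) ({P₀} : Set (Shear.Index d)) =
        Shear.nu α ({P₀} : Set (Shear.Index d)) :=
      ENNReal.rpow_left_injective (one_div_ne_zero hp₁.ne') h1
    unfold Shear.nu at h3
    rw [tsum_singleton P₀ fun P =>
        ENNReal.ofReal (Shear.cubeVol P ^ (p₁ * (s₂ - 1 / p₂ - s₁ + 1 / p₁))),
      tsum_singleton P₀ fun P => ENNReal.ofReal (Shear.cubeVol P ^ α)] at h3
    exact (ShearAux.exp_eq P₀ one_ne_zero h3).symm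
  · rintro rfl
    exact fun Γ _ => ShearAux.besov_eq s₁ s₂ p₁ p₂ hp₁ Γ
end
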